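/- arXiv:2605.11168 — 5 statements merged into one kernel-verified Lean document; each statement's English description precedes it below -/
import Mathlib

section
/- For every n ≥ 1 and every μ ∈ ℝ^p, the Kullback–Leibler divergence KL(N(μ, S_n) ‖ N(μ, Σ_n)) equals −(1/2) · log( det(n⁻¹ I + B) / ∏_{j=1}^p (n⁻¹ + B_{jj}) ). -/
open MeasureTheory Matrix Filter

/-- Posterior covariance `Σ_k = (I + kB)⁻¹` in the Gaussian location model. -/
noncomputable def Sig {p : ℕ} (B : Matrix (Fin p) (Fin p) ℝ) (k : ℕ) :
    Matrix (Fin p) (Fin p) ℝ :=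
  (1 + (k : ℝ) • B)⁻¹

/-- Mean-field covariance `S_k = diag((1 + k B_jj)⁻¹)`. -/
noncomputable def Sdiag {p : ℕ} (B : Matrix (Fin p) (Fin p) ℝ) (k : ℕ) :
    Matrix (Fin p) (Fin p) ℝ :=
  Matrix.diagonal fun j => (1 + (k : ℝ) * B j j)⁻¹

/-- Spectral norm (L2 operator norm) of a real square matrix. -/
noncomputable def specNorm {p : ℕ} (M : Matrix (Fin p) (Fin p) ℝ) : ℝ :=
  ‖(Matrix.toEuclideanCLM (𝕜 := ℝ) M : EuclideanSpace ℝ (Fin p) →L[ℝ] EuclideanSpace ℝ (Fin p))‖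

/-- Density of the multivariate Gaussian `N(μ, C)` on `ℝ^p` (with respect to Lebesgue measure),
for `C` symmetric positive definite. -/
noncomputable def gaussDensity {p : ℕ} (μ : Fin p → ℝ) (C : Matrix (Fin p) (Fin p) ℝ)
    (y : Fin p → ℝ) : ℝ :=
  (2 * Real.pi) ^ (-(p : ℝ) / 2) * C.det ^ (-(1 : ℝ) / 2) *
    Real.exp (-(1 / 2 : ℝ) * ((y - μ) ⬝ᵥ (C⁻¹ *ᵥ (y - μ))))

/-- Kullback–Leibler divergence `KL(N(μ₁, C₁) ‖ N(μ₂, C₂))` between multivariate Gaussian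
distributions, written as the integral of the log density ratio. -/
noncomputable def klGauss {p : ℕ} (μ₁ : Fin p → ℝ) (C₁ : Matrix (Fin p) (Fin p) ℝ)
    (μ₂ : Fin p → ℝ) (C₂ : Matrix (Fin p) (Fin p) ℝ) : ℝ :=
  ∫ y : Fin p → ℝ,
    gaussDensity μ₁ C₁ y * Real.log (gaussDensity μ₁ C₁ y / gaussDensity μ₂ C₂ y)

namespace KLAux

open Real

/-- The 1-D normalized Gaussian factor. -/
noncomputable def g1 (b : ℝ) (t : ℝ) : ℝ :=
  (2 * π) ^ (-(1:ℝ)/2) * b⁻¹ ^ (-(1:ℝ)/2) * Real.exp (-(1/2 : ℝ) * (b * t^2))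

lemma g1_int {b : ℝ} (hb : 0 < b) : ∫ t : ℝ, g1 b t = 1 := by
  unfold g1
  have h2 : (0:ℝ) < b / 2 := by linarith
  have : (fun t : ℝ => (2 * π) ^ (-(1:ℝ)/2) * b⁻¹ ^ (-(1:ℝ)/2) * Real.exp (-(1/2 : ℝ) * (b * t^2)))
      = fun t : ℝ => ((2 * π) ^ (-(1:ℝ)/2) * b⁻¹ ^ (-(1:ℝ)/2)) * Real.exp (-(b/2) * t^2) := by
    funext t; ring_nf
  rw [this, integral_const_mul, integral_gaussian]
  have hπ : (0:ℝ) < 2 * π := by positivity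
  rw [Real.sqrt_eq_rpow, Real.div_rpow pi_pos.le h2.le]
  rw [show (-1:ℝ)/2 = -((1:ℝ)/2) by norm_num] at *
  rw [Real.inv_rpow hb.le, Real.rpow_neg hb.le, inv_inv,
    Real.div_rpow hb.le (by norm_num : (0:ℝ) ≤ 2),
    Real.mul_rpow (by norm_num : (0:ℝ) ≤ 2) pi_pos.le,
    Real.rpow_neg (by norm_num : (0:ℝ) ≤ 2), Real.rpow_neg pi_pos.le]
  have hb2 : b ^ ((1:ℝ)/2) ≠ 0 := (Real.rpow_pos_of_pos hb _).ne'
  have h2' : (2:ℝ) ^ ((1:ℝ)/2) ≠ 0 := (Real.rpow_pos_of_pos (by norm_num) _).ne'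
  have hπ2 : π ^ ((1:ℝ)/2) ≠ 0 := (Real.rpow_pos_of_pos pi_pos _).ne'
  field_simp

lemma g1_moment (b : ℝ) : ∫ t : ℝ, t * g1 b t = 0 := by
  have hodd : ∀ t : ℝ, (-t) * g1 b (-t) = -(t * g1 b t) := by
    intro t; unfold g1; ring_nf
  have h := MeasureTheory.integral_neg_eq_self (fun t : ℝ => t * g1 b t) volume
  simp only [hodd] at h
  rw [integral_neg] at h
  linarith

lemma g1_integrable {b : ℝ} (hb : 0 < b) : Integrable (g1 b) := by
  have h2 : (0:ℝ) < b / 2 := by linarith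
  have : g1 b = fun t : ℝ =>
      ((2 * π) ^ (-(1:ℝ)/2) * b⁻¹ ^ (-(1:ℝ)/2)) * Real.exp (-(b/2) * t^2) := by
    funext t; unfold g1; ring_nf
  rw [this]
  exact (integrable_exp_neg_mul_sq h2).const_mul _

lemma g1_mul_integrable {b : ℝ} (hb : 0 < b) : Integrable (fun t => t * g1 b t) := by
  have h2 : (0:ℝ) < b / 2 := by linarith
  have : (fun t : ℝ => t * g1 b t) = fun t : ℝ =>
      ((2 * π) ^ (-(1:ℝ)/2) * b⁻¹ ^ (-(1:ℝ)/2)) * (t * Real.exp (-(b/2) * t^2)) := by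
    funext t; unfold g1; ring_nf
  rw [this]
  exact (integrable_mul_exp_neg_mul_sq h2).const_mul _

lemma g1_pos {b : ℝ} (hb : 0 < b) (t : ℝ) : 0 < g1 b t := by
  unfold g1
  have h1 : (0:ℝ) < (2 * π) ^ (-(1:ℝ)/2) := Real.rpow_pos_of_pos (by positivity) _
  have h2 : (0:ℝ) < b⁻¹ ^ (-(1:ℝ)/2) := Real.rpow_pos_of_pos (by positivity) _
  positivity

end KLAux

/-- Finite-`n` closed form of Lemma 2: the KL divergence between the optimal mean-field Gaussian
variational approximation `N(μ, S_n)` and the exact posterior `N(μ, Σ_n)` equals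
`-(1/2) log(det(n⁻¹ I + B) / ∏_j (n⁻¹ + B_jj))`. -/
theorem stmt_1 (p : ℕ) (hp : 1 ≤ p) (B : Matrix (Fin p) (Fin p) ℝ) (hB : B.PosDef)
    (n : ℕ) (hn : 1 ≤ n) (μ : Fin p → ℝ) :
    klGauss μ (Sdiag B n) μ (Sig B n) =
      -(1 / 2 : ℝ) *
        Real.log ((((n : ℝ)⁻¹ • (1 : Matrix (Fin p) (Fin p) ℝ) + B).det) /
          ∏ j, ((n : ℝ)⁻¹ + B j j)) := by
  classical
  have hn0 : (n:ℝ) ≠ 0 := by positivity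
  have hnn : (0:ℝ) ≤ (n:ℝ) := by positivity
  -- diagonal entries of B are positive
  have hdiag : ∀ j, 0 < B j j := by
    intro j
    have hne : (Pi.single j 1 : Fin p → ℝ) ≠ 0 := by
      intro h
      have := congrFun h j
      simp at this
    have := hB.dotProduct_mulVec_pos hne
    simpa [Matrix.mulVec_single, dotProduct_single] using this
  set bv : Fin p → ℝ := fun j => 1 + (n:ℝ) * B j j with hbv
  have hbpos : ∀ j, 0 < bv j := by
    intro j
    have := hdiag j
    simp only [hbv]
    positivity
  set D : ℝ := ((1 : Matrix (Fin p) (Fin p) ℝ) + (n:ℝ) • B).det with hD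
  set P : ℝ := ∏ j, bv j with hPdef
  have hPpos : 0 < P := Finset.prod_pos fun j _ => hbpos j
  -- 1 + n • B is positive definite
  have hPS : (((n:ℝ)) • B).PosSemidef := by
    refine Matrix.PosSemidef.of_dotProduct_mulVec_nonneg ?_ fun x => ?_
    · rw [Matrix.IsHermitian, Matrix.conjTranspose_smul, hB.1.eq]; simp
    · rw [Matrix.smul_mulVec, dotProduct_smul]
      exact smul_nonneg hnn (hB.posSemidef.dotProduct_mulVec_nonneg x)
  have hpd : ((1 : Matrix (Fin p) (Fin p) ℝ) + (n:ℝ) • B).PosDef :=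
    Matrix.PosDef.add_posSemidef Matrix.PosDef.one hPS
  have hDpos : 0 < D := hpd.det_pos
  -- matrix computations
  have hC1inv : (Sdiag B n)⁻¹ = Matrix.diagonal bv := by
    refine Matrix.inv_eq_right_inv ?_
    rw [Sdiag, Matrix.diagonal_mul_diagonal]
    have : (fun j => (1 + (n:ℝ) * B j j)⁻¹ * bv j) = fun _ => (1:ℝ) :=
      funext fun j => inv_mul_cancel₀ (hbpos j).ne'
    rw [this, Matrix.diagonal_one]
  have hC1det : (Sdiag B n).det = P⁻¹ := by
    rw [Sdiag, Matrix.det_diagonal, hPdef, ← Finset.prod_inv_distrib]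
  have hC2inv : (Sig B n)⁻¹ = (1 : Matrix (Fin p) (Fin p) ℝ) + (n:ℝ) • B :=
    Matrix.nonsing_inv_nonsing_inv _ hDpos.ne'.isUnit
  have hC2det : (Sig B n).det = D⁻¹ := by
    rw [Sig, Matrix.det_nonsing_inv, Ring.inverse_eq_inv']
  -- density formulas
  set K₁ : ℝ := (2 * Real.pi) ^ (-(p:ℝ)/2) * (P⁻¹) ^ (-(1:ℝ)/2) with hK₁
  set K₂ : ℝ := (2 * Real.pi) ^ (-(p:ℝ)/2) * (D⁻¹) ^ (-(1:ℝ)/2) with hK₂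
  have hK₁pos : 0 < K₁ := by
    have h1 : (0:ℝ) < (2 * Real.pi) ^ (-(p:ℝ)/2) := Real.rpow_pos_of_pos (by positivity) _
    have h2 : (0:ℝ) < (P⁻¹) ^ (-(1:ℝ)/2) := Real.rpow_pos_of_pos (by positivity) _
    positivity
  have hK₂pos : 0 < K₂ := by
    have h1 : (0:ℝ) < (2 * Real.pi) ^ (-(p:ℝ)/2) := Real.rpow_pos_of_pos (by positivity) _
    have h2 : (0:ℝ) < (D⁻¹) ^ (-(1:ℝ)/2) := Real.rpow_pos_of_pos (by positivity) _
    positivity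
  have hquad1 : ∀ z : Fin p → ℝ, z ⬝ᵥ ((Sdiag B n)⁻¹ *ᵥ z) = ∑ j, bv j * z j ^ 2 := by
    intro z
    rw [hC1inv]
    simp only [dotProduct, Matrix.mulVec_diagonal]
    exact Finset.sum_congr rfl fun j _ => by ring
  have hf1 : ∀ z : Fin p → ℝ,
      gaussDensity μ (Sdiag B n) (μ + z) = K₁ * Real.exp (-(1/2:ℝ) * ∑ j, bv j * z j ^ 2) := by
    intro z
    rw [gaussDensity, hC1det, add_sub_cancel_left, hquad1 z]
  have hf2 : ∀ z : Fin p → ℝ,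
      gaussDensity μ (Sig B n) (μ + z)
        = K₂ * Real.exp (-(1/2:ℝ) * (z ⬝ᵥ ((1 + (n:ℝ) • B) *ᵥ z))) := by
    intro z
    rw [gaussDensity, hC2det, add_sub_cancel_left, hC2inv]
  -- product form of the mean-field density
  have hf1prod : ∀ z : Fin p → ℝ,
      K₁ * Real.exp (-(1/2:ℝ) * ∑ j, bv j * z j ^ 2) = ∏ j, KLAux.g1 (bv j) (z j) := by
    intro z
    unfold KLAux.g1
    rw [Finset.prod_mul_distrib, Finset.prod_mul_distrib, ← Real.exp_sum]
    have e1 : ∏ _j : Fin p, (2 * Real.pi) ^ (-(1:ℝ)/2) = (2 * Real.pi) ^ (-(p:ℝ)/2) := by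
      rw [Finset.prod_const, Finset.card_univ, Fintype.card_fin,
        ← Real.rpow_natCast ((2 * Real.pi) ^ (-(1:ℝ)/2)) p, ← Real.rpow_mul (by positivity)]
      congr 1
      ring
    have e2 : ∏ j : Fin p, ((bv j)⁻¹) ^ (-(1:ℝ)/2) = (P⁻¹) ^ (-(1:ℝ)/2) := by
      rw [Real.finset_prod_rpow _ _ (fun j _ => (inv_pos.mpr (hbpos j)).le) _, hPdef,
        ← Finset.prod_inv_distrib]
    have e3 : ∑ j, (-(1/2:ℝ) * (bv j * z j ^ 2)) = -(1/2:ℝ) * ∑ j, bv j * z j ^ 2 := by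
      rw [← Finset.mul_sum]
    rw [e1, e2, e3, hK₁]
  -- the quadratic identity
  have hquadid : ∀ z : Fin p → ℝ,
      -(1/2:ℝ) * (∑ j, bv j * z j ^ 2) + (1/2:ℝ) * (z ⬝ᵥ ((1 + (n:ℝ) • B) *ᵥ z))
        = ∑ q : Fin p × Fin p,
            (if q.1 = q.2 then 0 else ((n:ℝ)/2) * B q.1 q.2) * (z q.1 * z q.2) := by
    intro z
    have hS1 : ∑ j, bv j * z j ^ 2
        = (∑ j, z j * z j) + (n:ℝ) * ∑ j, B j j * (z j * z j) := by
      rw [Finset.mul_sum, ← Finset.sum_add_distrib]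
      exact Finset.sum_congr rfl fun j _ => by simp only [hbv]; ring
    have hS2 : z ⬝ᵥ ((1 + (n:ℝ) • B) *ᵥ z)
        = (∑ j, z j * z j) + (n:ℝ) * ∑ i, ∑ j, B i j * (z i * z j) := by
      rw [Matrix.add_mulVec, Matrix.one_mulVec, Matrix.smul_mulVec,
        dotProduct_add, dotProduct_smul, smul_eq_mul]
      have hzz : z ⬝ᵥ z = ∑ j, z j * z j := rfl
      have hzB : z ⬝ᵥ (B *ᵥ z) = ∑ i, ∑ j, B i j * (z i * z j) := by
          simp only [dotProduct, Matrix.mulVec, dotProduct]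
          refine Finset.sum_congr rfl fun i _ => ?_
          rw [Finset.mul_sum]
          exact Finset.sum_congr rfl fun j _ => by ring
      rw [hzz, hzB]
    have hS3 : ∑ q : Fin p × Fin p,
        (if q.1 = q.2 then 0 else ((n:ℝ)/2) * B q.1 q.2) * (z q.1 * z q.2)
        = ((n:ℝ)/2) * (∑ i, ∑ j, B i j * (z i * z j))
          - ((n:ℝ)/2) * ∑ j, B j j * (z j * z j) := by
      rw [Fintype.sum_prod_type]
      have h1 : ∀ i : Fin p, ∑ j, (if i = j then 0 else ((n:ℝ)/2) * B i j) * (z i * z j)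
          = (∑ j, ((n:ℝ)/2) * (B i j * (z i * z j)))
            - ((n:ℝ)/2) * (B i i * (z i * z i)) := by
        intro i
        have hpt : ∀ j : Fin p, (if i = j then 0 else ((n:ℝ)/2) * B i j) * (z i * z j)
            = ((n:ℝ)/2) * (B i j * (z i * z j))
              - (if i = j then ((n:ℝ)/2) * (B i j * (z i * z j)) else 0) := by
          intro j; by_cases h : i = j <;> simp [h] <;> ring
        rw [Finset.sum_congr rfl fun j _ => hpt j, Finset.sum_sub_distrib,
          Finset.sum_ite_eq]
        simp
      rw [Finset.sum_congr rfl fun i _ => h1 i, Finset.sum_sub_distrib]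
      congr 1
      · rw [Finset.mul_sum]
        exact Finset.sum_congr rfl fun i _ => by rw [Finset.mul_sum]
      · rw [Finset.mul_sum]
    rw [hS1, hS2, hS3]
    ring
  -- the constant
  set c : ℝ := -(1/2:ℝ) * Real.log (D / P) with hc
  have hlogK : Real.log K₁ - Real.log K₂ = c := by
    have hA : ((2 * Real.pi) ^ (-(p:ℝ)/2) : ℝ) ≠ 0 := (Real.rpow_pos_of_pos (by positivity) _).ne'
    have hP1 : (P⁻¹ ^ (-(1:ℝ)/2) : ℝ) ≠ 0 := (Real.rpow_pos_of_pos (by positivity) _).ne'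
    have hD1 : (D⁻¹ ^ (-(1:ℝ)/2) : ℝ) ≠ 0 := (Real.rpow_pos_of_pos (by positivity) _).ne'
    rw [hK₁, hK₂, Real.log_mul hA hP1, Real.log_mul hA hD1,
      Real.log_rpow (inv_pos.mpr hPpos), Real.log_rpow (inv_pos.mpr hDpos),
      Real.log_inv P, Real.log_inv D, hc, Real.log_div hDpos.ne' hPpos.ne']
    ring
  -- key pointwise identity
  have hkey : ∀ z : Fin p → ℝ,
      gaussDensity μ (Sdiag B n) (μ + z) *
          Real.log (gaussDensity μ (Sdiag B n) (μ + z) / gaussDensity μ (Sig B n) (μ + z))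
        = c * ∏ j, KLAux.g1 (bv j) (z j)
          + ∑ q : Fin p × Fin p,
              ((if q.1 = q.2 then 0 else ((n:ℝ)/2) * B q.1 q.2) * (z q.1 * z q.2)) *
                ∏ j, KLAux.g1 (bv j) (z j) := by
    intro z
    rw [hf1 z, hf2 z]
    have hexp1 : (Real.exp (-(1/2:ℝ) * ∑ j, bv j * z j ^ 2) : ℝ) ≠ 0 := Real.exp_ne_zero _
    have hexp2 : (Real.exp (-(1/2:ℝ) * (z ⬝ᵥ ((1 + (n:ℝ) • B) *ᵥ z))) : ℝ) ≠ 0 :=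
      Real.exp_ne_zero _
    rw [Real.log_div (mul_ne_zero hK₁pos.ne' hexp1) (mul_ne_zero hK₂pos.ne' hexp2),
      Real.log_mul hK₁pos.ne' hexp1, Real.log_mul hK₂pos.ne' hexp2,
      Real.log_exp, Real.log_exp]
    have hre : Real.log K₁ + -(1/2:ℝ) * ∑ j, bv j * z j ^ 2
          - (Real.log K₂ + -(1/2:ℝ) * (z ⬝ᵥ ((1 + (n:ℝ) • B) *ᵥ z)))
        = c + ∑ q : Fin p × Fin p,
            (if q.1 = q.2 then 0 else ((n:ℝ)/2) * B q.1 q.2) * (z q.1 * z q.2) := by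
      rw [← hquadid z, ← hlogK]
      ring
    rw [hre, hf1prod z, mul_add, mul_comm (∏ j, KLAux.g1 (bv j) (z j)) c,
      Finset.mul_sum]
    congr 1
    exact Finset.sum_congr rfl fun q _ => by ring
  -- integrability of the product density
  have hgP : Integrable (fun z : Fin p → ℝ => ∏ j, KLAux.g1 (bv j) (z j)) :=
    Integrable.fintype_prod (fun j => KLAux.g1_integrable (hbpos j))
  -- the cross terms: integrable with zero integral
  have hterm : ∀ q : Fin p × Fin p,
      Integrable (fun z : Fin p → ℝ =>
        ((if q.1 = q.2 then 0 else ((n:ℝ)/2) * B q.1 q.2) * (z q.1 * z q.2)) *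
          ∏ j, KLAux.g1 (bv j) (z j))
      ∧ (∫ z : Fin p → ℝ,
          ((if q.1 = q.2 then 0 else ((n:ℝ)/2) * B q.1 q.2) * (z q.1 * z q.2)) *
            ∏ j, KLAux.g1 (bv j) (z j)) = 0 := by
    intro q
    by_cases hq : q.1 = q.2
    · have h0 : (fun z : Fin p → ℝ =>
          ((if q.1 = q.2 then 0 else ((n:ℝ)/2) * B q.1 q.2) * (z q.1 * z q.2)) *
            ∏ j, KLAux.g1 (bv j) (z j)) = fun _ => 0 := by
        funext z
        rw [if_pos hq]
        ring
      rw [h0]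
      exact ⟨integrable_zero _ _ _, integral_zero _ _⟩
    · set co : ℝ := ((n:ℝ)/2) * B q.1 q.2 with hco
      have hsplit : ∀ z : Fin p → ℝ,
          ((if q.1 = q.2 then 0 else co) * (z q.1 * z q.2)) * ∏ j, KLAux.g1 (bv j) (z j)
            = co * ∏ j, ((if j = q.1 ∨ j = q.2 then z j else 1) * KLAux.g1 (bv j) (z j)) := by
        intro z
        rw [if_neg hq, Finset.prod_mul_distrib]
        have hmem : ∀ j : Fin p, (if j = q.1 ∨ j = q.2 then z j else 1)
            = (if j ∈ ({q.1, q.2} : Finset (Fin p)) then z j else 1) := by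
          intro j
          simp [Finset.mem_insert, Finset.mem_singleton]
        rw [Finset.prod_congr rfl fun j _ => hmem j, Finset.prod_ite_mem,
          Finset.univ_inter, Finset.prod_pair (fun h => hq h)]
        ring
      have hint : ∀ j : Fin p,
          Integrable (fun t : ℝ => (if j = q.1 ∨ j = q.2 then t else 1) * KLAux.g1 (bv j) t) := by
        intro j
        by_cases hj : j = q.1 ∨ j = q.2
        · simp only [if_pos hj]
          exact KLAux.g1_mul_integrable (hbpos j)
        · simp only [if_neg hj, one_mul]
          exact KLAux.g1_integrable (hbpos j)
      have hintP : Integrable (fun z : Fin p → ℝ =>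
          ∏ j, ((if j = q.1 ∨ j = q.2 then z j else 1) * KLAux.g1 (bv j) (z j))) :=
        Integrable.fintype_prod hint
      constructor
      · have := hintP.const_mul co
        refine this.congr ?_
        filter_upwards with z
        rw [hsplit z]
      · rw [MeasureTheory.integral_congr_ae (Filter.Eventually.of_forall hsplit),
          integral_const_mul,
          MeasureTheory.integral_fintype_prod_volume_eq_prod (ι := Fin p)
            (f := fun j (t : ℝ) => (if j = q.1 ∨ j = q.2 then t else 1) * KLAux.g1 (bv j) t)]
        have hz : (∫ t : ℝ, (if q.1 = q.1 ∨ q.1 = q.2 then t else 1) * KLAux.g1 (bv q.1) t) = 0 := by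
          simp only [if_pos (Or.inl rfl)]
          exact KLAux.g1_moment _
        rw [Finset.prod_eq_zero (Finset.mem_univ q.1) hz, mul_zero]
  -- main computation
  have hmain : klGauss μ (Sdiag B n) μ (Sig B n) = c := by
    rw [klGauss]
    rw [← MeasureTheory.integral_add_left_eq_self
      (μ := (volume : Measure (Fin p → ℝ)))
      (fun y : Fin p → ℝ =>
        gaussDensity μ (Sdiag B n) y *
          Real.log (gaussDensity μ (Sdiag B n) y / gaussDensity μ (Sig B n) y)) μ]
    rw [MeasureTheory.integral_congr_ae (Filter.Eventually.of_forall hkey)]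
    rw [MeasureTheory.integral_add (hgP.const_mul c)
      (MeasureTheory.integrable_finset_sum _ fun q _ => (hterm q).1)]
    rw [MeasureTheory.integral_finset_sum _ fun q _ => (hterm q).1]
    rw [Finset.sum_congr rfl fun q _ => (hterm q).2, Finset.sum_const_zero, add_zero]
    rw [integral_const_mul,
      MeasureTheory.integral_fintype_prod_volume_eq_prod (ι := Fin p)
        (f := fun j (t : ℝ) => KLAux.g1 (bv j) t)]
    rw [Finset.prod_congr rfl fun j _ => KLAux.g1_int (hbpos j), Finset.prod_const_one, mul_one]
  -- identify the constant with the stated right-hand side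
  rw [hmain, hc]
  have hm : (n:ℝ)⁻¹ • (1 : Matrix (Fin p) (Fin p) ℝ) + B
      = (n:ℝ)⁻¹ • ((1 : Matrix (Fin p) (Fin p) ℝ) + (n:ℝ) • B) := by
    rw [smul_add, smul_smul, inv_mul_cancel₀ hn0, one_smul]
  have hdet : ((n:ℝ)⁻¹ • (1 : Matrix (Fin p) (Fin p) ℝ) + B).det = ((n:ℝ)⁻¹)^p * D := by
    rw [hm, Matrix.det_smul, hD, Fintype.card_fin]
  have hprod : ∏ j, ((n:ℝ)⁻¹ + B j j) = ((n:ℝ)⁻¹)^p * P := by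
    have hj : ∀ j : Fin p, (n:ℝ)⁻¹ + B j j = (n:ℝ)⁻¹ * bv j := by
      intro j
      rw [hbv]
      field_simp
    rw [Finset.prod_congr rfl fun j _ => hj j, Finset.prod_mul_distrib, Finset.prod_const,
      Finset.card_univ, Fintype.card_fin, hPdef]
  rw [hdet, hprod, mul_div_mul_left _ _ (pow_ne_zero _ (inv_ne_zero hn0))]
end

section
/- For n ≥ 1 and j ≥ 1 define M_{n,j} := Σ_{n+j} B (B⁻¹ + S_{n+j−1}) B Σ_{n+j}. Then there exists a constant C > 0, depending only on B, such that for every n ≥ 1 the series Σ_{j=1}^∞ M_{n,j} converges in spectral norm and ‖ Σ_{j=1}^∞ M_{n,j} − Σ_n ‖ ≤ C / n². -/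
open MeasureTheory Matrix Filter

/-- The increment covariance `M_{n,j} = Σ_{n+j} B (B⁻¹ + S_{n+j-1}) B Σ_{n+j}`; the index `j : ℕ`
here corresponds to the paper's index `j + 1 ≥ 1`. -/
noncomputable def Mnj {p : ℕ} (B : Matrix (Fin p) (Fin p) ℝ) (n j : ℕ) :
    Matrix (Fin p) (Fin p) ℝ :=
  Sig B (n + j + 1) * B * (B⁻¹ + Sdiag B (n + j)) * B * Sig B (n + j + 1)

section Aux
set_option linter.unusedSectionVars false
open scoped Matrix.Norms.L2Operator InnerProductSpace RealInnerProductSpace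

variable {p : ℕ}

lemma specNorm_eq_norm (M : Matrix (Fin p) (Fin p) ℝ) : specNorm M = ‖M‖ := rfl

lemma inner_phi (A : Matrix (Fin p) (Fin p) ℝ) (x : EuclideanSpace ℝ (Fin p)) :
    ⟪x, toEuclideanCLM (𝕜 := ℝ) A x⟫_ℝ = (WithLp.equiv 2 _ x) ⬝ᵥ (A *ᵥ WithLp.equiv 2 _ x) := by
  simp [PiLp.inner_apply, RCLike.inner_apply, dotProduct]; exact Finset.sum_congr rfl (fun i _ => mul_comm _ _)

lemma norm_sq_eq_dot (x : EuclideanSpace ℝ (Fin p)) :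
    ‖x‖ ^ 2 = (WithLp.equiv 2 _ x) ⬝ᵥ (WithLp.equiv 2 _ x) := by
  have h := inner_phi (1 : Matrix (Fin p) (Fin p) ℝ) x
  rw [_root_.map_one, ContinuousLinearMap.one_apply, real_inner_self_eq_norm_sq] at h
  rw [h, Matrix.one_mulVec]

lemma exists_coercive (hp : 1 ≤ p) {B : Matrix (Fin p) (Fin p) ℝ} (hB : B.PosDef) :
    ∃ lam : ℝ, 0 < lam ∧
      ∀ x : EuclideanSpace ℝ (Fin p), lam * ‖x‖ ^ 2 ≤ ⟪x, toEuclideanCLM (𝕜 := ℝ) B x⟫_ℝ := by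
  set T := toEuclideanCLM (𝕜 := ℝ) B with hT
  have hcont : Continuous fun x : EuclideanSpace ℝ (Fin p) => ⟪x, T x⟫_ℝ :=
    continuous_id.inner T.continuous
  have hsph : IsCompact (Metric.sphere (0 : EuclideanSpace ℝ (Fin p)) 1) := isCompact_sphere 0 1
  have hne : (Metric.sphere (0 : EuclideanSpace ℝ (Fin p)) 1).Nonempty := by
    refine ⟨EuclideanSpace.single ⟨0, hp⟩ (1 : ℝ), ?_⟩
    simp [mem_sphere_zero_iff_norm, EuclideanSpace.norm_single]
  obtain ⟨x₀, hx₀, hmin⟩ := hsph.exists_isMinOn hne hcont.continuousOn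
  have hx₀n : ‖x₀‖ = 1 := by simpa [mem_sphere_zero_iff_norm] using hx₀
  have hpos : ∀ x : EuclideanSpace ℝ (Fin p), x ≠ 0 → 0 < ⟪x, T x⟫_ℝ := by
    intro x hx
    rw [hT, inner_phi]
    have hx' : WithLp.equiv 2 (Fin p → ℝ) x ≠ 0 := by
      simpa using (WithLp.equiv 2 (Fin p → ℝ)).injective.ne hx
    have := hB.dotProduct_mulVec_pos hx'
    simpa using this
  have hlam : 0 < ⟪x₀, T x₀⟫_ℝ := hpos x₀ (by intro h; rw [h] at hx₀n; simp at hx₀n)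
  refine ⟨_, hlam, fun x => ?_⟩
  rcases eq_or_ne x 0 with rfl | hx
  · simp
  · have hxn : 0 < ‖x‖ := norm_pos_iff.2 hx
    set u : EuclideanSpace ℝ (Fin p) := ‖x‖⁻¹ • x with hu
    have hun : ‖u‖ = 1 := by
      rw [hu, norm_smul, norm_inv, norm_norm, inv_mul_cancel₀ hxn.ne']
    have humem : u ∈ Metric.sphere (0 : EuclideanSpace ℝ (Fin p)) 1 := by
      simp [mem_sphere_zero_iff_norm, hun]
    have h1 : ⟪x₀, T x₀⟫_ℝ ≤ ⟪u, T u⟫_ℝ := hmin humem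
    have h2 : ⟪u, T u⟫_ℝ = ‖x‖⁻¹ * (‖x‖⁻¹ * ⟪x, T x⟫_ℝ) := by
      rw [hu, T.map_smul, real_inner_smul_left, real_inner_smul_right]
    rw [h2] at h1
    have := mul_le_mul_of_nonneg_left h1 (by positivity : (0:ℝ) ≤ ‖x‖ ^ 2)
    calc ⟪x₀, T x₀⟫_ℝ * ‖x‖ ^ 2 = ‖x‖ ^ 2 * ⟪x₀, T x₀⟫_ℝ := by ring
    _ ≤ ‖x‖ ^ 2 * (‖x‖⁻¹ * (‖x‖⁻¹ * ⟪x, T x⟫_ℝ)) := this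
    _ = ⟪x, T x⟫_ℝ := by field_simp

lemma inv_norm_le' {A : Matrix (Fin p) (Fin p) ℝ} {c : ℝ} (hc : 0 < c) (hU : IsUnit A)
    (h : ∀ x : EuclideanSpace ℝ (Fin p), c * ‖x‖ ^ 2 ≤ ⟪x, toEuclideanCLM (𝕜 := ℝ) A x⟫_ℝ) :
    ‖A⁻¹‖ ≤ 1 / c := by
  have hdet : IsUnit A.det := (Matrix.isUnit_iff_isUnit_det A).1 hU
  have hAA : A * A⁻¹ = 1 := Matrix.mul_nonsing_inv A hdet
  rw [Matrix.cstar_norm_def]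
  refine ContinuousLinearMap.opNorm_le_bound _ (by positivity) fun y => ?_
  set x := toEuclideanCLM (𝕜 := ℝ) A⁻¹ y with hx
  have hAx : toEuclideanCLM (𝕜 := ℝ) A x = y := by
    rw [hx, ← ContinuousLinearMap.mul_apply, ← _root_.map_mul, hAA, _root_.map_one,
      ContinuousLinearMap.one_apply]
  have h1 : c * ‖x‖ ^ 2 ≤ ⟪x, y⟫_ℝ := by rw [← hAx]; exact h x
  have h2 : ⟪x, y⟫_ℝ ≤ ‖x‖ * ‖y‖ := real_inner_le_norm x y
  rcases eq_or_lt_of_le (norm_nonneg x) with h0 | h0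
  · rw [← h0]; positivity
  · have : c * ‖x‖ ≤ ‖y‖ := by
      have := h1.trans h2
      rw [pow_two] at this
      nlinarith
    rw [div_mul_eq_mul_div, one_mul, le_div_iff₀ hc]
    linarith [this]

lemma isUnit_of_coercive {A : Matrix (Fin p) (Fin p) ℝ} {c : ℝ} (hc : 0 < c)
    (h : ∀ x : EuclideanSpace ℝ (Fin p), c * ‖x‖ ^ 2 ≤ ⟪x, toEuclideanCLM (𝕜 := ℝ) A x⟫_ℝ) :
    IsUnit A := by
  rw [← Matrix.mulVec_injective_iff_isUnit]
  have hinj : Function.Injective (toEuclideanCLM (𝕜 := ℝ) A) := by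
    intro x y hxy
    have h0 : toEuclideanCLM (𝕜 := ℝ) A (x - y) = 0 := by rw [map_sub, hxy, sub_self]
    have := h (x - y)
    rw [h0, inner_zero_right] at this
    have hxy0 : ‖x - y‖ ^ 2 ≤ 0 := by nlinarith
    have : ‖x - y‖ = 0 := by nlinarith [norm_nonneg (x - y)]
    exact sub_eq_zero.1 (norm_eq_zero.1 this)
  intro v w hvw
  have h2 : ((WithLp.equiv 2 (Fin p → ℝ)).symm v : EuclideanSpace ℝ (Fin p))
      = (WithLp.equiv 2 (Fin p → ℝ)).symm w := by
    apply hinj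
    simp [Matrix.toEuclideanCLM_toLp, hvw]
  simpa using congrArg (WithLp.equiv 2 (Fin p → ℝ)) h2

section withB
variable {B : Matrix (Fin p) (Fin p) ℝ} {lam : ℝ} (hlam : 0 < lam)
  (hco : ∀ x : EuclideanSpace ℝ (Fin p), lam * ‖x‖ ^ 2 ≤ ⟪x, toEuclideanCLM (𝕜 := ℝ) B x⟫_ℝ)
include hlam hco

lemma coercive_Ak (k : ℕ) :
    ∀ x : EuclideanSpace ℝ (Fin p),
      (1 + (k : ℝ) * lam) * ‖x‖ ^ 2 ≤
        ⟪x, toEuclideanCLM (𝕜 := ℝ) (1 + (k : ℝ) • B) x⟫_ℝ := by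
  intro x
  have hmap : toEuclideanCLM (𝕜 := ℝ) (1 + (k : ℝ) • B) x
      = x + (k : ℝ) • toEuclideanCLM (𝕜 := ℝ) B x := by
    rw [map_add, _root_.map_one, _root_.map_smul]
    rfl
  rw [hmap, inner_add_right, real_inner_smul_right, real_inner_self_eq_norm_sq]
  have := mul_le_mul_of_nonneg_left (hco x) (Nat.cast_nonneg (α := ℝ) k)
  nlinarith [norm_nonneg x]

lemma isUnit_Ak (k : ℕ) : IsUnit (1 + (k : ℝ) • B) :=
  isUnit_of_coercive (by positivity) (coercive_Ak hlam hco k)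

lemma norm_Sig (k : ℕ) : ‖Sig B k‖ ≤ 1 / (1 + (k : ℝ) * lam) :=
  inv_norm_le' (by positivity) (isUnit_Ak hlam hco k) (coercive_Ak hlam hco k)

lemma lam_le_diag (j : Fin p) : lam ≤ B j j := by
  have h := hco (EuclideanSpace.single j (1 : ℝ))
  rw [inner_phi] at h
  simpa [EuclideanSpace.norm_single, EuclideanSpace.ofLp_single, Matrix.mulVec_single,
    single_dotProduct] using h

lemma sdiag_eq_inv (k : ℕ) :
    Sdiag B k = (Matrix.diagonal fun j => 1 + (k : ℝ) * B j j)⁻¹ := by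
  have hd : ∀ j, (1 + (k : ℝ) * B j j) ≠ 0 := by
    intro j
    have := lam_le_diag hlam hco j
    have : (0:ℝ) < 1 + (k : ℝ) * B j j := by nlinarith [Nat.cast_nonneg (α := ℝ) k]
    exact this.ne'
  symm
  apply Matrix.inv_eq_right_inv
  rw [Sdiag, Matrix.diagonal_mul_diagonal]
  convert Matrix.diagonal_one using 2
  funext j
  exact mul_inv_cancel₀ (hd j)

lemma coercive_Dk (k : ℕ) :
    ∀ x : EuclideanSpace ℝ (Fin p),
      (1 + (k : ℝ) * lam) * ‖x‖ ^ 2 ≤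
        ⟪x, toEuclideanCLM (𝕜 := ℝ) (Matrix.diagonal fun j => 1 + (k : ℝ) * B j j) x⟫_ℝ := by
  intro x
  rw [inner_phi, norm_sq_eq_dot]
  set y := WithLp.equiv 2 (Fin p → ℝ) x with hy
  rw [dotProduct, dotProduct, Finset.mul_sum]
  refine Finset.sum_le_sum fun j _ => ?_
  rw [Matrix.mulVec_diagonal]
  have h1 : lam ≤ B j j := lam_le_diag hlam hco j
  nlinarith [mul_nonneg (mul_nonneg (Nat.cast_nonneg (α := ℝ) k) (sub_nonneg.2 h1))
    (mul_self_nonneg (y j))]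

lemma norm_Sdiag (k : ℕ) : ‖Sdiag B k‖ ≤ 1 / (1 + (k : ℝ) * lam) := by
  rw [sdiag_eq_inv hlam hco]
  exact inv_norm_le' (by positivity)
    (isUnit_of_coercive (by positivity) (coercive_Dk hlam hco k)) (coercive_Dk hlam hco k)

end withB

lemma telescope {B : Matrix (Fin p) (Fin p) ℝ}
    (hU : ∀ k : ℕ, IsUnit (1 + (k : ℝ) • B)) (k : ℕ) :
    Sig B k - Sig B (k + 1) = Sig B (k + 1) * B * Sig B k := by
  set A0 : Matrix (Fin p) (Fin p) ℝ := 1 + (k : ℝ) • B with hA0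
  set A1 : Matrix (Fin p) (Fin p) ℝ := 1 + ((k + 1 : ℕ) : ℝ) • B with hA1'
  have hA1 : A1 = A0 + B := by
    rw [hA1', hA0]
    push_cast
    rw [add_smul, one_smul, add_assoc]
  have h0 : A0 * A0⁻¹ = 1 :=
    Matrix.mul_nonsing_inv _ ((Matrix.isUnit_iff_isUnit_det _).1 (hU k))
  have h1 : A1⁻¹ * A1 = 1 :=
    Matrix.nonsing_inv_mul _ ((Matrix.isUnit_iff_isUnit_det _).1 (hU (k + 1)))
  show A0⁻¹ - A1⁻¹ = A1⁻¹ * B * A0⁻¹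
  have hBeq : B = A1 - A0 := by rw [hA1, add_sub_cancel_left]
  calc A0⁻¹ - A1⁻¹ = (A1⁻¹ * A1) * A0⁻¹ - A1⁻¹ * (A0 * A0⁻¹) := by
        rw [h0, h1, one_mul, mul_one]
    _ = A1⁻¹ * (A1 - A0) * A0⁻¹ := by noncomm_ring
    _ = A1⁻¹ * B * A0⁻¹ := by rw [← hBeq]

lemma mnj_decomp {B : Matrix (Fin p) (Fin p) ℝ} (hB : B.PosDef)
    (hU : ∀ k : ℕ, IsUnit (1 + (k : ℝ) • B)) (n j : ℕ) :
    Mnj B n j = (Sig B (n + j) - Sig B (n + j + 1)) +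
      (Sig B (n + j + 1) * B * Sdiag B (n + j) * B * Sig B (n + j + 1)
        - Sig B (n + j + 1) * B * (Sig B (n + j) - Sig B (n + j + 1))) := by
  set S := Sig B (n + j)
  set S' := Sig B (n + j + 1)
  set D := Sdiag B (n + j)
  have hT : S - S' = S' * B * S := telescope hU (n + j)
  have hBB : B * B⁻¹ = 1 :=
    Matrix.mul_nonsing_inv _ ((Matrix.isUnit_iff_isUnit_det _).1 hB.isUnit)
  have h3 : S' * B * S' = S' * B * S - S' * B * (S - S') := by
    have h4 : S' * B * S' = S' * B * (S - (S - S')) := by rw [sub_sub_cancel]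
    rw [h4, mul_sub]
  calc Mnj B n j = S' * (B * B⁻¹) * (B * S') + S' * B * D * (B * S') := by
        rw [Mnj]; noncomm_ring
    _ = S' * B * S' + S' * B * D * B * S' := by rw [hBB]; noncomm_ring
    _ = _ := by rw [h3, hT]; noncomm_ring

lemma norm_mul5 (a b c d e : Matrix (Fin p) (Fin p) ℝ) :
    ‖a * b * c * d * e‖ ≤ ‖a‖ * ‖b‖ * ‖c‖ * ‖d‖ * ‖e‖ := by
  calc ‖a * b * c * d * e‖ ≤ ‖a * b * c * d‖ * ‖e‖ := norm_mul_le _ _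
    _ ≤ (‖a * b * c‖ * ‖d‖) * ‖e‖ := by
        exact mul_le_mul_of_nonneg_right (norm_mul_le _ _) (norm_nonneg _)
    _ ≤ ((‖a * b‖ * ‖c‖) * ‖d‖) * ‖e‖ := by
        exact mul_le_mul_of_nonneg_right
          (mul_le_mul_of_nonneg_right (norm_mul_le _ _) (norm_nonneg _)) (norm_nonneg _)
    _ ≤ (((‖a‖ * ‖b‖) * ‖c‖) * ‖d‖) * ‖e‖ := by
        exact mul_le_mul_of_nonneg_right (mul_le_mul_of_nonneg_right
          (mul_le_mul_of_nonneg_right (norm_mul_le _ _) (norm_nonneg _)) (norm_nonneg _))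
          (norm_nonneg _)

lemma scalar_bound {lam : ℝ} (hlam : 0 < lam) {n : ℕ} (hn : 1 ≤ n) (j : ℕ) :
    (1 / (1 + ((n + j + 1 : ℕ) : ℝ) * lam)) ^ 2 * (1 / (1 + ((n + j : ℕ) : ℝ) * lam))
      ≤ (1 / lam ^ 3) * (1 / ((n : ℝ) + 1)) * (1 / ((n + j : ℕ) : ℝ) - 1 / ((n + j + 1 : ℕ) : ℝ)) := by
  have hcast : ((n + j + 1 : ℕ) : ℝ) = ((n + j : ℕ) : ℝ) + 1 := by push_cast; ring
  set a : ℝ := ((n + j : ℕ) : ℝ) with ha'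
  have ha : 1 ≤ a := by
    rw [ha']; exact_mod_cast Nat.le_add_right_of_le hn
  have han : (n : ℝ) ≤ a := by rw [ha']; exact_mod_cast Nat.le_add_right n j
  have ha0 : 0 < a := lt_of_lt_of_le one_pos ha
  rw [hcast]
  have e1 : 1 / a - 1 / (a + 1) = 1 / (a * (a + 1)) := by
    field_simp
    ring
  rw [e1, div_pow, one_pow, div_mul_div_comm, one_mul, div_mul_div_comm, one_mul,
    div_mul_div_comm, one_mul]
  apply one_div_le_one_div_of_le
  · positivity
  · calc lam ^ 3 * ((n : ℝ) + 1) * (a * (a + 1)) ≤ lam ^ 3 * (a + 1) * (a * (a + 1)) := by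
          gcongr
      _ = ((1 + (a + 1) * lam) ^ 2 * (1 + a * lam)) -
            ((1 + (a + 1) * lam) ^ 2 * (1 + a * lam) - lam ^ 3 * (a + 1) * (a * (a + 1))) := by
          ring
      _ ≤ (1 + (a + 1) * lam) ^ 2 * (1 + a * lam) := by
          have key : ((a + 1) * lam) ^ 2 * (a * lam) = lam ^ 3 * (a + 1) * (a * (a + 1)) := by ring
          have h2 : ((a + 1) * lam) ^ 2 * (a * lam) ≤ (1 + (a + 1) * lam) ^ 2 * (1 + a * lam) := by
            gcongr <;> nlinarith
          linarith [key ▸ h2]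


/-- Key covariance decomposition in the proof of Theorem 2: there is a constant `C > 0`,
depending only on `B`, such that for every `n ≥ 1` the series `Σ_{j≥1} M_{n,j}` converges in
spectral norm and `‖Σ_{j≥1} M_{n,j} - Σ_n‖ ≤ C / n²`. -/
theorem stmt_5 (p : ℕ) (hp : 1 ≤ p) (B : Matrix (Fin p) (Fin p) ℝ) (hB : B.PosDef) :
    ∃ C : ℝ, 0 < C ∧ ∀ n : ℕ, 1 ≤ n →
      ∃ V : Matrix (Fin p) (Fin p) ℝ,
        Tendsto (fun N : ℕ => specNorm ((∑ j ∈ Finset.range N, Mnj B n j) - V)) atTop (nhds 0) ∧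
          specNorm (V - Sig B n) ≤ C / (n : ℝ) ^ 2 := by
  obtain ⟨lam, hlam, hco⟩ := exists_coercive hp hB
  have hU : ∀ k : ℕ, IsUnit (1 + (k : ℝ) • B) := isUnit_Ak hlam hco
  refine ⟨2 * (‖B‖ ^ 2 + 1) / lam ^ 3, by positivity, fun n hn => ?_⟩
  set f : ℕ → Matrix (Fin p) (Fin p) ℝ := fun j =>
    Sig B (n + j + 1) * B * Sdiag B (n + j) * B * Sig B (n + j + 1)
      - Sig B (n + j + 1) * B * (Sig B (n + j) - Sig B (n + j + 1)) with hf
  set g : ℕ → ℝ := fun j => 1 / ((n + j : ℕ) : ℝ) - 1 / ((n + j + 1 : ℕ) : ℝ) with hg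
  set K : ℝ := 2 * ‖B‖ ^ 2 / lam ^ 3 * (1 / ((n : ℝ) + 1)) with hK
  have hg_nonneg : ∀ j, 0 ≤ g j := by
    intro j
    have h0 : (0 : ℝ) < ((n + j : ℕ) : ℝ) := by
      exact_mod_cast Nat.lt_of_lt_of_le Nat.zero_lt_one (Nat.le_add_right_of_le hn)
    have h1 : ((n + j : ℕ) : ℝ) ≤ ((n + j + 1 : ℕ) : ℝ) := by exact_mod_cast Nat.le_succ _
    have := one_div_le_one_div_of_le h0 h1
    simp only [hg, sub_nonneg]
    exact this
  have hgsum : HasSum g (1 / (n : ℝ)) := by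
    rw [hasSum_iff_tendsto_nat_of_nonneg hg_nonneg]
    have hps : ∀ N, ∑ j ∈ Finset.range N, g j = 1 / ((n : ℕ) : ℝ) - 1 / ((n + N : ℕ) : ℝ) := by
      intro N
      simp only [hg]
      exact Finset.sum_range_sub' (f := fun i => 1 / ((n + i : ℕ) : ℝ)) N
    simp only [hps]
    have h2 : Tendsto (fun N : ℕ => 1 / ((n + N : ℕ) : ℝ)) atTop (nhds 0) := by
      have h3 : Tendsto (fun N : ℕ => n + N) atTop atTop := by
        have := tendsto_add_atTop_nat n
        simpa [Function.comp, add_comm] using this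
      exact tendsto_one_div_atTop_nhds_zero_nat.comp h3
    have := h2.const_sub (1 / ((n : ℕ) : ℝ))
    simpa using this
  have hfb : ∀ j, ‖f j‖ ≤ K * g j := by
    intro j
    have hT : Sig B (n + j) - Sig B (n + j + 1) = Sig B (n + j + 1) * B * Sig B (n + j) :=
      telescope hU (n + j)
    set u' : ℝ := 1 / (1 + ((n + j + 1 : ℕ) : ℝ) * lam) with hu'
    set u : ℝ := 1 / (1 + ((n + j : ℕ) : ℝ) * lam) with hu
    have hu'0 : 0 < u' := by rw [hu']; positivity
    have hu0 : 0 < u := by rw [hu]; positivity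
    have hS' : ‖Sig B (n + j + 1)‖ ≤ u' := norm_Sig hlam hco (n + j + 1)
    have hS : ‖Sig B (n + j)‖ ≤ u := norm_Sig hlam hco (n + j)
    have hD : ‖Sdiag B (n + j)‖ ≤ u := norm_Sdiag hlam hco (n + j)
    have h1 : ‖Sig B (n + j + 1) * B * Sdiag B (n + j) * B * Sig B (n + j + 1)‖
        ≤ u' * ‖B‖ * u * ‖B‖ * u' := by
      calc _ ≤ ‖Sig B (n + j + 1)‖ * ‖B‖ * ‖Sdiag B (n + j)‖ * ‖B‖ * ‖Sig B (n + j + 1)‖ :=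
            norm_mul5 _ _ _ _ _
        _ ≤ u' * ‖B‖ * u * ‖B‖ * u' := by gcongr
    have h2 : ‖Sig B (n + j + 1) * B * (Sig B (n + j) - Sig B (n + j + 1))‖
        ≤ u' * ‖B‖ * u' * ‖B‖ * u := by
      rw [hT, show Sig B (n + j + 1) * B * (Sig B (n + j + 1) * B * Sig B (n + j))
        = Sig B (n + j + 1) * B * Sig B (n + j + 1) * B * Sig B (n + j) from by noncomm_ring]
      calc _ ≤ ‖Sig B (n + j + 1)‖ * ‖B‖ * ‖Sig B (n + j + 1)‖ * ‖B‖ * ‖Sig B (n + j)‖ :=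
            norm_mul5 _ _ _ _ _
        _ ≤ u' * ‖B‖ * u' * ‖B‖ * u := by gcongr
    have h3 : ‖f j‖ ≤ 2 * ‖B‖ ^ 2 * (u' ^ 2 * u) := by
      calc ‖f j‖ ≤ _ + _ := norm_sub_le _ _
        _ ≤ (u' * ‖B‖ * u * ‖B‖ * u') + (u' * ‖B‖ * u' * ‖B‖ * u) := add_le_add h1 h2
        _ = 2 * ‖B‖ ^ 2 * (u' ^ 2 * u) := by ring
    have h4 : u' ^ 2 * u ≤ (1 / lam ^ 3) * (1 / ((n : ℝ) + 1)) * g j := scalar_bound hlam hn j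
    calc ‖f j‖ ≤ 2 * ‖B‖ ^ 2 * (u' ^ 2 * u) := h3
      _ ≤ 2 * ‖B‖ ^ 2 * ((1 / lam ^ 3) * (1 / ((n : ℝ) + 1)) * g j) := by
          have hB2 : (0:ℝ) ≤ 2 * ‖B‖ ^ 2 := by positivity
          exact mul_le_mul_of_nonneg_left h4 hB2
      _ = K * g j := by rw [hK]; ring
  have hKg_summable : Summable (fun j => K * g j) := hgsum.summable.mul_left K
  have hfnorm_summable : Summable (fun j => ‖f j‖) :=
    Summable.of_nonneg_of_le (fun j => norm_nonneg _) hfb hKg_summable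
  have hfsummable : Summable f := Summable.of_norm_bounded hKg_summable hfb
  refine ⟨Sig B n + ∑' j, f j, ?_, ?_⟩
  · simp only [specNorm_eq_norm]
    have hdec : ∀ N, ∑ j ∈ Finset.range N, Mnj B n j
        = (Sig B n - Sig B (n + N)) + ∑ j ∈ Finset.range N, f j := by
      intro N
      rw [Finset.sum_congr rfl (fun j _ => mnj_decomp hB hU n j), Finset.sum_add_distrib]
      congr 1
      have := Finset.sum_range_sub' (f := fun i => Sig B (n + i)) N
      simpa [add_assoc] using this
    have key : ∀ N, (∑ j ∈ Finset.range N, Mnj B n j) - (Sig B n + ∑' j, f j)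
        = ((∑ j ∈ Finset.range N, f j) - ∑' j, f j) - Sig B (n + N) := by
      intro N; rw [hdec N]; abel
    simp only [key]
    have t1 : Tendsto (fun N => (∑ j ∈ Finset.range N, f j) - ∑' j, f j) atTop (nhds 0) := by
      have := hfsummable.hasSum.tendsto_sum_nat.sub_const (∑' j, f j)
      simpa using this
    have t2 : Tendsto (fun N => Sig B (n + N)) atTop (nhds 0) := by
      rw [tendsto_zero_iff_norm_tendsto_zero]
      apply squeeze_zero (fun N => norm_nonneg _) (fun N => norm_Sig hlam hco (n + N))
      have h3 : Tendsto (fun N : ℕ => 1 + ((n + N : ℕ) : ℝ) * lam) atTop atTop := by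
        apply tendsto_atTop_add_const_left
        apply Tendsto.atTop_mul_const hlam
        have h4 : Tendsto (fun N : ℕ => n + N) atTop atTop := by
          have := tendsto_add_atTop_nat n
          simpa [Function.comp, add_comm] using this
        exact tendsto_natCast_atTop_atTop.comp h4
      simpa [one_div, Pi.inv_def] using h3.inv_tendsto_atTop
    have := (t1.sub t2).norm
    simpa using this
  · rw [specNorm_eq_norm, add_sub_cancel_left]
    calc ‖∑' j, f j‖ ≤ ∑' j, ‖f j‖ := norm_tsum_le_tsum_norm hfnorm_summable
      _ ≤ ∑' j, K * g j := Summable.tsum_le_tsum hfb hfnorm_summable hKg_summable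
      _ = K * (1 / (n : ℝ)) := by rw [tsum_mul_left, hgsum.tsum_eq]
      _ ≤ (2 * (‖B‖ ^ 2 + 1) / lam ^ 3) / (n : ℝ) ^ 2 := by
          have hn1 : (1 : ℝ) ≤ (n : ℝ) := by exact_mod_cast hn
          have hn0 : (0 : ℝ) < (n : ℝ) := by linarith
          have c1 : 2 * ‖B‖ ^ 2 / lam ^ 3 ≤ 2 * (‖B‖ ^ 2 + 1) / lam ^ 3 := by
            gcongr
            linarith
          have c2 : 1 / ((n : ℝ) + 1) ≤ 1 / (n : ℝ) :=
            one_div_le_one_div_of_le hn0 (by linarith)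
          calc K * (1 / (n : ℝ))
              ≤ (2 * (‖B‖ ^ 2 + 1) / lam ^ 3 * (1 / (n : ℝ))) * (1 / (n : ℝ)) := by
                rw [hK]
                apply mul_le_mul_of_nonneg_right _ (by positivity)
                exact mul_le_mul c1 c2 (by positivity) (by positivity)
            _ = (2 * (‖B‖ ^ 2 + 1) / lam ^ 3) / (n : ℝ) ^ 2 := by ring

end Aux
end

section
/- For every integer k ≥ 1, ‖ Σ_k B S_{k−1} B Σ_k ‖ ≤ 1 / ( k² (1 + (k−1) λ_min(B)) ). -/
open MeasureTheory Matrix Filter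

section Aux

open scoped Matrix.Norms.L2Operator

lemma specNorm_eq_l2norm {p : ℕ} (M : Matrix (Fin p) (Fin p) ℝ) : specNorm M = ‖M‖ := rfl

lemma l2norm_diagonal_le {p : ℕ} (d : Fin p → ℝ) {c : ℝ} (hc : 0 ≤ c)
    (h : ∀ i, |d i| ≤ c) : ‖(Matrix.diagonal d : Matrix (Fin p) (Fin p) ℝ)‖ ≤ c := by
  rw [Matrix.cstar_norm_def]
  refine ContinuousLinearMap.opNorm_le_bound _ hc fun x => ?_
  have happ : ∀ j, (Matrix.toEuclideanCLM (𝕜 := ℝ) (Matrix.diagonal d) x) j = d j * x j := by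
    intro j
    have := congrFun (Matrix.ofLp_toEuclideanCLM (𝕜 := ℝ) (Matrix.diagonal d) x) j
    simpa [Matrix.toLin'_apply, Matrix.mulVec_diagonal] using this
  rw [EuclideanSpace.norm_eq, EuclideanSpace.norm_eq]
  rw [← Real.sqrt_sq hc, ← Real.sqrt_mul (by positivity)]
  apply Real.sqrt_le_sqrt
  rw [Finset.mul_sum]
  refine Finset.sum_le_sum fun i _ => ?_
  rw [happ i]
  have hi := h i
  have hsq : (d i)^2 ≤ c^2 := by nlinarith [abs_nonneg (d i), sq_abs (d i)]
  simp only [Real.norm_eq_abs, sq_abs]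
  nlinarith [sq_nonneg (x i), sq_nonneg (d i * x i)]

theorem stmt_9_aux (p : ℕ) (hp : 1 ≤ p) (B : Matrix (Fin p) (Fin p) ℝ) (hB : B.PosDef)
    (k : ℕ) (hk : 1 ≤ k) :
    specNorm (Sig B k * B * Sdiag B (k - 1) * B * Sig B k) ≤
      1 / ((k : ℝ) ^ 2 * (1 + ((k : ℝ) - 1) * ⨅ i, hB.isHermitian.eigenvalues i)) := by
  haveI : Nonempty (Fin p) := ⟨⟨0, hp⟩⟩
  have hH := hB.isHermitian
  set lam := hH.eigenvalues with hlam
  have hlampos : ∀ i, 0 < lam i := fun i => hB.eigenvalues_pos i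
  set lmin : ℝ := ⨅ i, lam i with hlmin
  have hbdd : BddBelow (Set.range lam) := Finite.bddBelow_range lam
  have hlmin_le : ∀ i, lmin ≤ lam i := fun i => ciInf_le hbdd i
  have hlminpos : 0 < lmin := by
    obtain ⟨i0, hi0⟩ := exists_eq_ciInf_of_finite (f := lam)
    rw [hlmin, ← hi0]; exact hlampos i0
  have hkR : (1:ℝ) ≤ (k:ℝ) := by exact_mod_cast hk
  have hkpos : (0:ℝ) < k := by linarith
  set t : ℝ := (k:ℝ) - 1 with ht
  have htnn : 0 ≤ t := by simp [ht]; linarith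
  have hcast : (((k - 1 : ℕ)) : ℝ) = t := by
    rw [ht, Nat.cast_sub hk, Nat.cast_one]
  set V : Matrix (Fin p) (Fin p) ℝ := (hH.eigenvectorUnitary : Matrix (Fin p) (Fin p) ℝ) with hVdef
  have hV : V ∈ unitary (Matrix (Fin p) (Fin p) ℝ) := hH.eigenvectorUnitary.2
  have hVs : V * star V = 1 := (Matrix.mem_unitaryGroup_iff).mp hV
  have hsV : star V * V = 1 := (Matrix.mem_unitaryGroup_iff').mp hV
  have hspec : B = V * Matrix.diagonal lam * star V := by
    simpa [Function.comp] using hH.spectral_theorem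
  have hconj : ∀ f g : Fin p → ℝ,
      (V * Matrix.diagonal f * star V) * (V * Matrix.diagonal g * star V)
      = V * Matrix.diagonal (fun i => f i * g i) * star V := by
    intro f g
    calc (V * Matrix.diagonal f * star V) * (V * Matrix.diagonal g * star V)
        = V * Matrix.diagonal f * (star V * V) * Matrix.diagonal g * star V := by
          simp only [Matrix.mul_assoc]
      _ = V * Matrix.diagonal (fun i => f i * g i) * star V := by
          rw [hsV, mul_one, Matrix.mul_assoc V, Matrix.diagonal_mul_diagonal]
  have hnconj : ∀ M : Matrix (Fin p) (Fin p) ℝ, ‖V * M * star V‖ = ‖M‖ := by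
    intro M
    rw [mul_assoc, CStarRing.norm_mem_unitary_mul _ hV,
      CStarRing.norm_mul_mem_unitary _ (Unitary.star_mem hV)]
  -- the matrix 1 + k•B in diagonalized form
  have haux : ∀ i, (0:ℝ) < 1 + (k:ℝ) * lam i := fun i => by
    have := hlampos i; positivity
  have hIk : (1 : Matrix (Fin p) (Fin p) ℝ) + (k:ℝ) • B
      = V * Matrix.diagonal (fun i => 1 + (k:ℝ) * lam i) * star V := by
    have : (Matrix.diagonal (fun i => 1 + (k:ℝ) * lam i) : Matrix (Fin p) (Fin p) ℝ)
        = 1 + (k:ℝ) • Matrix.diagonal lam := by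
      rw [← Matrix.diagonal_one, ← Matrix.diagonal_smul, ← Matrix.diagonal_add]
      rfl
    rw [this, Matrix.mul_add, Matrix.add_mul, mul_one, hVs]
    rw [Matrix.mul_smul, Matrix.smul_mul, ← hspec]
  have hSig : Sig B k = V * Matrix.diagonal (fun i => (1 + (k:ℝ) * lam i)⁻¹) * star V := by
    rw [Sig]
    apply Matrix.inv_eq_right_inv
    rw [hIk, hconj]
    have : (fun i => (1 + (k:ℝ) * lam i) * (1 + (k:ℝ) * lam i)⁻¹) = fun _ => (1:ℝ) := by
      funext i; exact mul_inv_cancel₀ (haux i).ne'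
    rw [this, Matrix.diagonal_one, mul_one, hVs]
  -- products
  have hSigB : Sig B k * B
      = V * Matrix.diagonal (fun i => (1 + (k:ℝ) * lam i)⁻¹ * lam i) * star V := by
    conv_lhs => rw [hSig, hspec]
    exact hconj _ _
  have hBSig : B * Sig B k
      = V * Matrix.diagonal (fun i => lam i * (1 + (k:ℝ) * lam i)⁻¹) * star V := by
    rw [hSig]
    conv_lhs => rw [hspec]
    exact hconj _ _
  -- norm bounds for the two outer factors
  have hmu : ∀ i, (0:ℝ) ≤ (1 + (k:ℝ) * lam i)⁻¹ * lam i ∧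
      (1 + (k:ℝ) * lam i)⁻¹ * lam i ≤ 1 / (k:ℝ) := by
    intro i
    have h1 := haux i
    have h2 := hlampos i
    constructor
    · positivity
    · rw [inv_mul_eq_div, div_le_div_iff₀ h1 hkpos]
      nlinarith
  have hn1 : ‖Sig B k * B‖ ≤ 1 / (k:ℝ) := by
    rw [hSigB, hnconj]
    refine l2norm_diagonal_le _ (by positivity) fun i => ?_
    have := hmu i
    rw [abs_of_nonneg this.1]; exact this.2
  have hn2 : ‖B * Sig B k‖ ≤ 1 / (k:ℝ) := by
    rw [hBSig, hnconj]
    refine l2norm_diagonal_le _ (by positivity) fun i => ?_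
    have := hmu i
    rw [mul_comm, abs_of_nonneg this.1]; exact this.2
  -- diagonal entries of B dominate lmin
  have hBjj : ∀ j, lmin ≤ B j j := by
    intro j
    have hone : (1:ℝ) = ∑ i, V j i * V j i := by
      have := congrFun (congrFun hVs j) j
      simp only [Matrix.mul_apply, Matrix.one_apply_eq] at this
      rw [← this]
      refine Finset.sum_congr rfl fun i _ => ?_
      simp [Matrix.star_apply]
    have hBj : B j j = ∑ i, lam i * (V j i * V j i) := by
      conv_lhs => rw [hspec]
      rw [Matrix.mul_apply]
      refine Finset.sum_congr rfl fun i _ => ?_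
      rw [Matrix.mul_diagonal, Matrix.star_apply, star_trivial]
      ring
    rw [hBj]
    calc lmin = lmin * ∑ i, V j i * V j i := by rw [← hone, mul_one]
      _ = ∑ i, lmin * (V j i * V j i) := Finset.mul_sum _ _ _
      _ ≤ ∑ i, lam i * (V j i * V j i) := by
          refine Finset.sum_le_sum fun i _ => ?_
          exact mul_le_mul_of_nonneg_right (hlmin_le i) (mul_self_nonneg _)
  have hdpos : (0:ℝ) < 1 + t * lmin := by positivity
  have hn3 : ‖Sdiag B (k-1)‖ ≤ (1 + t * lmin)⁻¹ := by
    rw [Sdiag]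
    refine l2norm_diagonal_le _ (by positivity) fun j => ?_
    rw [hcast]
    have hj : (0:ℝ) < 1 + t * B j j := lt_of_lt_of_le hdpos (by nlinarith [hBjj j])
    rw [abs_of_nonneg (le_of_lt (inv_pos.mpr hj))]
    exact inv_anti₀ hdpos (by nlinarith [hBjj j])
  -- combine
  rw [specNorm_eq_l2norm]
  have hassoc : Sig B k * B * Sdiag B (k - 1) * B * Sig B k
      = (Sig B k * B) * Sdiag B (k - 1) * (B * Sig B k) := by
    simp only [Matrix.mul_assoc]
  rw [hassoc]
  have hb1 : ‖(Sig B k * B) * Sdiag B (k - 1) * (B * Sig B k)‖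
      ≤ ‖Sig B k * B‖ * ‖Sdiag B (k - 1)‖ * ‖B * Sig B k‖ := by
    calc ‖(Sig B k * B) * Sdiag B (k - 1) * (B * Sig B k)‖
        ≤ ‖(Sig B k * B) * Sdiag B (k - 1)‖ * ‖B * Sig B k‖ := norm_mul_le _ _
      _ ≤ ‖Sig B k * B‖ * ‖Sdiag B (k - 1)‖ * ‖B * Sig B k‖ :=
          mul_le_mul_of_nonneg_right (norm_mul_le _ _) (norm_nonneg _)
  refine hb1.trans ?_
  have hfin : ‖Sig B k * B‖ * ‖Sdiag B (k - 1)‖ * ‖B * Sig B k‖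
      ≤ (1/(k:ℝ)) * (1 + t * lmin)⁻¹ * (1/(k:ℝ)) := by
    have h1 : (0:ℝ) ≤ 1/(k:ℝ) := by positivity
    have h2 : (0:ℝ) ≤ (1 + t * lmin)⁻¹ := by positivity
    apply mul_le_mul (mul_le_mul hn1 hn3 (norm_nonneg _) h1) hn2 (norm_nonneg _)
    positivity
  refine hfin.trans (le_of_eq ?_)
  have hk0 : (k:ℝ) ≠ 0 := hkpos.ne'
  have hd0 : (1 + t * lmin) ≠ 0 := hdpos.ne'
  field_simp
end Aux

/-- For every `k ≥ 1`, `‖Σ_k B S_{k-1} B Σ_k‖ ≤ 1/(k² (1 + (k-1) λ_min(B)))` in spectral norm. -/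
theorem stmt_9 (p : ℕ) (hp : 1 ≤ p) (B : Matrix (Fin p) (Fin p) ℝ) (hB : B.PosDef)
    (k : ℕ) (hk : 1 ≤ k) :
    specNorm (Sig B k * B * Sdiag B (k - 1) * B * Sig B k) ≤
      1 / ((k : ℝ) ^ 2 * (1 + ((k : ℝ) - 1) * ⨅ i, hB.isHermitian.eigenvalues i)) := by
  exact stmt_9_aux p hp B hB k hk
end

section
/- For every integer k ≥ 1, ‖ Σ_k B Σ_{k−1} B Σ_k ‖ ≤ 1 / ( k² (1 + (k−1) λ_min(B)) ). -/
open MeasureTheory Matrix Filter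

lemma specNorm_diagonal_le {p : ℕ} (d : Fin p → ℝ) (c : ℝ) (hc : 0 ≤ c)
    (h : ∀ i, |d i| ≤ c) : specNorm (Matrix.diagonal d) ≤ c := by
  refine ContinuousLinearMap.opNorm_le_bound _ hc fun x => ?_
  have hx : ∀ i, (Matrix.toEuclideanCLM (𝕜 := ℝ) (Matrix.diagonal d) x) i = d i * x i := by
    intro i
    have h2 := congrFun (Matrix.ofLp_toEuclideanCLM (𝕜 := ℝ) (Matrix.diagonal d) x) i
    simpa [Matrix.mulVec_diagonal, WithLp.equiv] using h2
  rw [EuclideanSpace.norm_eq, EuclideanSpace.norm_eq, ← Real.sqrt_sq hc,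
    ← Real.sqrt_mul (by positivity)]
  apply Real.sqrt_le_sqrt
  rw [Finset.mul_sum]
  apply Finset.sum_le_sum
  intro i _
  rw [hx i, Real.norm_eq_abs, Real.norm_eq_abs, sq_abs, sq_abs, mul_pow]
  have : (d i)^2 ≤ c^2 := by
    rw [← sq_abs]
    exact pow_le_pow_left₀ (abs_nonneg _) (h i) 2
  exact mul_le_mul_of_nonneg_right this (sq_nonneg _)

lemma specNorm_unitary_conj_le {p : ℕ} (hp : 1 ≤ p) (U : Matrix.unitaryGroup (Fin p) ℝ)
    (M : Matrix (Fin p) (Fin p) ℝ) :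
    specNorm ((U : Matrix (Fin p) (Fin p) ℝ) * M * star (U : Matrix (Fin p) (Fin p) ℝ)) ≤
      specNorm M := by
  have : Nonempty (Fin p) := ⟨⟨0, hp⟩⟩
  have hU1 : (U : Matrix (Fin p) (Fin p) ℝ) * star (U : Matrix (Fin p) (Fin p) ℝ) = 1 :=
    Matrix.mem_unitaryGroup_iff.mp U.2
  have hU2 : star (U : Matrix (Fin p) (Fin p) ℝ) * (U : Matrix (Fin p) (Fin p) ℝ) = 1 :=
    Matrix.mem_unitaryGroup_iff'.mp U.2
  set T := fun A : Matrix (Fin p) (Fin p) ℝ => (Matrix.toEuclideanCLM (𝕜 := ℝ) A :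
    EuclideanSpace ℝ (Fin p) →L[ℝ] EuclideanSpace ℝ (Fin p)) with hT
  have hnormU : ‖T (U : Matrix (Fin p) (Fin p) ℝ)‖ = 1 := by
    have h2 : ‖T (U : Matrix (Fin p) (Fin p) ℝ)‖ * ‖T (U : Matrix (Fin p) (Fin p) ℝ)‖ = 1 := by
      rw [← CStarRing.norm_star_mul_self]
      simp only [hT, ← map_star, ← _root_.map_mul, hU2, _root_.map_one, norm_one]
    nlinarith [norm_nonneg (T (U : Matrix (Fin p) (Fin p) ℝ))]
  have hnormUs : ‖T (star (U : Matrix (Fin p) (Fin p) ℝ))‖ = 1 := by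
    have h2 : ‖T (star (U : Matrix (Fin p) (Fin p) ℝ))‖ * ‖T (star (U : Matrix (Fin p) (Fin p) ℝ))‖ = 1 := by
      rw [← CStarRing.norm_star_mul_self]
      simp only [hT, ← map_star, ← _root_.map_mul, star_star, hU1, _root_.map_one, norm_one]
    nlinarith [norm_nonneg (T (star (U : Matrix (Fin p) (Fin p) ℝ)))]
  unfold specNorm
  calc ‖T ((U : Matrix (Fin p) (Fin p) ℝ) * M * star (U : Matrix (Fin p) (Fin p) ℝ))‖
      = ‖T (U : Matrix (Fin p) (Fin p) ℝ) * T M * T (star (U : Matrix (Fin p) (Fin p) ℝ))‖ := by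
        rw [hT]; simp [_root_.map_mul]
    _ ≤ ‖T (U : Matrix (Fin p) (Fin p) ℝ)‖ * ‖T M‖ * ‖T (star (U : Matrix (Fin p) (Fin p) ℝ))‖ :=
        le_trans (norm_mul_le _ _) (by gcongr; exact norm_mul_le _ _)
    _ = ‖T M‖ := by rw [hnormU, hnormUs]; ring

/-- For every `k ≥ 1`, `‖Σ_k B Σ_{k-1} B Σ_k‖ ≤ 1/(k² (1 + (k-1) λ_min(B)))` in spectral norm. -/
theorem stmt_10 (p : ℕ) (hp : 1 ≤ p) (B : Matrix (Fin p) (Fin p) ℝ) (hB : B.PosDef)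
    (k : ℕ) (hk : 1 ≤ k) :
    specNorm (Sig B k * B * Sig B (k - 1) * B * Sig B k) ≤
      1 / ((k : ℝ) ^ 2 * (1 + ((k : ℝ) - 1) * ⨅ i, hB.isHermitian.eigenvalues i)) := by
  have hne : Nonempty (Fin p) := ⟨⟨0, hp⟩⟩
  set e := hB.isHermitian.eigenvalues with he
  set U := hB.isHermitian.eigenvectorUnitary with hUdef
  set V : Matrix (Fin p) (Fin p) ℝ := (U : Matrix (Fin p) (Fin p) ℝ) with hV
  have hU1 : V * star V = 1 := Matrix.mem_unitaryGroup_iff.mp U.2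
  have hU2 : star V * V = 1 := Matrix.mem_unitaryGroup_iff'.mp U.2
  have hspec : B = V * Matrix.diagonal e * star V := by
    have h := hB.isHermitian.spectral_theorem
    rw [Unitary.conjStarAlgAut_apply] at h
    exact h
  have hepos : ∀ i, 0 < e i := fun i => hB.eigenvalues_pos i
  -- infimum of eigenvalues
  set μ := ⨅ i, e i with hμ
  obtain ⟨i₀, hi₀⟩ := Finite.exists_min e
  have hμle : ∀ i, μ ≤ e i := fun i => ciInf_le (Finite.bddBelow_range _) i
  have hμpos : 0 < μ := lt_of_lt_of_le (hepos i₀) (le_ciInf hi₀)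
  -- diagonalization of Sig
  have hSig : ∀ n : ℕ, Sig B n
      = V * Matrix.diagonal (fun i => (1 + (n : ℝ) * e i)⁻¹) * star V := by
    intro n
    have hd : ∀ i, (1 + (n : ℝ) * e i) ≠ 0 := fun i => by
      have := hepos i; positivity
    have h1 : (1 : Matrix (Fin p) (Fin p) ℝ) + (n : ℝ) • B
        = V * Matrix.diagonal (fun i => 1 + (n : ℝ) * e i) * star V := by
      have hdd : Matrix.diagonal (fun i : Fin p => 1 + (n : ℝ) * e i)
          = 1 + (n : ℝ) • Matrix.diagonal e := by
        rw [← Matrix.diagonal_one, ← Matrix.diagonal_smul, ← Matrix.diagonal_add]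
        rfl
      rw [hdd, Matrix.mul_add, Matrix.add_mul, Matrix.mul_smul, Matrix.smul_mul,
        Matrix.mul_one, hU1, ← hspec]
    have hDinv : (Matrix.diagonal (fun i : Fin p => 1 + (n : ℝ) * e i))⁻¹
        = Matrix.diagonal (fun i => (1 + (n : ℝ) * e i)⁻¹) := by
      refine Matrix.inv_eq_left_inv ?_
      rw [Matrix.diagonal_mul_diagonal]
      convert Matrix.diagonal_one with i
      exact inv_mul_cancel₀ (hd i)
    have hVi : V⁻¹ = star V := Matrix.inv_eq_left_inv (by rw [hU2])
    have hVsi : (star V)⁻¹ = V := Matrix.inv_eq_left_inv (by rw [hU1])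
    rw [Sig, h1, Matrix.mul_inv_rev, Matrix.mul_inv_rev, hVi, hVsi, hDinv, ← mul_assoc]
  -- conjugated product
  have hmul : ∀ d1 d2 : Fin p → ℝ,
      (V * Matrix.diagonal d1 * star V) * (V * Matrix.diagonal d2 * star V)
        = V * Matrix.diagonal (fun i => d1 i * d2 i) * star V := by
    intro d1 d2
    simp only [mul_assoc]
    rw [← mul_assoc (star V) V, hU2, one_mul, ← mul_assoc (Matrix.diagonal d1),
      Matrix.diagonal_mul_diagonal]
  set s : Fin p → ℝ := fun i => (1 + (k : ℝ) * e i)⁻¹ with hs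
  set t : Fin p → ℝ := fun i => (1 + ((k - 1 : ℕ) : ℝ) * e i)⁻¹ with ht
  have hprod : Sig B k * B * Sig B (k - 1) * B * Sig B k
      = V * Matrix.diagonal (fun i => s i * e i * t i * e i * s i) * star V := by
    rw [hSig k, hSig (k - 1), hspec, hmul, hmul, hmul, hmul]
  -- scalar bound
  have hK1 : (1 : ℝ) ≤ (k : ℝ) := by exact_mod_cast hk
  have hm : ((k - 1 : ℕ) : ℝ) = (k : ℝ) - 1 := by
    push_cast [Nat.cast_sub hk]; ring
  have hcden : 0 < 1 + ((k : ℝ) - 1) * μ := by nlinarith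
  have hcpos : 0 < (k : ℝ) ^ 2 * (1 + ((k : ℝ) - 1) * μ) := by positivity
  rw [hprod]
  refine le_trans (specNorm_unitary_conj_le hp U _) ?_
  refine specNorm_diagonal_le _ (1 / ((k : ℝ) ^ 2 * (1 + ((k : ℝ) - 1) * μ))) (by positivity) fun i => ?_
  have hei := hepos i
  have ha : (0 : ℝ) < 1 + (k : ℝ) * e i := by nlinarith
  have hb : (0 : ℝ) < 1 + ((k - 1 : ℕ) : ℝ) * e i := by rw [hm]; nlinarith [hμle i]
  have hcb : 1 + ((k : ℝ) - 1) * μ ≤ 1 + ((k - 1 : ℕ) : ℝ) * e i := by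
    rw [hm]; nlinarith [hμle i]
  have hF0 : 0 ≤ s i * e i * t i * e i * s i := by
    rw [hs, ht]; positivity
  rw [abs_of_nonneg hF0]
  have heq : s i * e i * t i * e i * s i
      = (e i * (1 + (k : ℝ) * e i)⁻¹) ^ 2 * (1 + ((k - 1 : ℕ) : ℝ) * e i)⁻¹ := by
    rw [hs, ht]; ring
  rw [heq]
  have h1 : e i * (1 + (k : ℝ) * e i)⁻¹ ≤ ((k : ℝ))⁻¹ := by
    rw [← div_eq_mul_inv, inv_eq_one_div, div_le_div_iff₀ ha (by linarith)]
    nlinarith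
  have h2 : (1 + ((k - 1 : ℕ) : ℝ) * e i)⁻¹ ≤ (1 + ((k : ℝ) - 1) * μ)⁻¹ := by
    gcongr
  calc (e i * (1 + (k : ℝ) * e i)⁻¹) ^ 2 * (1 + ((k - 1 : ℕ) : ℝ) * e i)⁻¹
      ≤ ((k : ℝ))⁻¹ ^ 2 * (1 + ((k : ℝ) - 1) * μ)⁻¹ := by
        refine mul_le_mul ?_ h2 (by positivity) (by positivity)
        exact pow_le_pow_left₀ (by positivity) h1 2
    _ = 1 / ((k : ℝ) ^ 2 * (1 + ((k : ℝ) - 1) * μ)) := by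
        field_simp
end

section
/- Fix m ∈ ℝ^p and an integer k ≥ 1, let Ỹ be an ℝ^p-valued random vector distributed as N(m, B⁻¹ + S_k), and define the increment Δ := Σ_{k+1} B (Ỹ − m). Then there exists a constant C > 0, depending only on B and p, such that E[‖Δ‖₂⁴] ≤ C / k⁴; in particular √(E[‖Δ‖₂⁴]) = O(k⁻²). -/
open MeasureTheory Matrix Filter

set_option maxHeartbeats 1000000

section Helpers
variable {p : ℕ}

lemma symm_dot (M : Matrix (Fin p) (Fin p) ℝ) (hM : M.IsHermitian) (x y : Fin p → ℝ) :
    x ⬝ᵥ (M *ᵥ y) = y ⬝ᵥ (M *ᵥ x) := by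
  have hMT : Mᵀ = M := by
    rw [← conjTranspose_eq_transpose_of_trivial]; exact hM
  rw [dotProduct_mulVec, ← mulVec_transpose, hMT, dotProduct_comm]

lemma cs_psd {M : Matrix (Fin p) (Fin p) ℝ} (hM : M.PosSemidef) (x y : Fin p → ℝ) :
    (x ⬝ᵥ (M *ᵥ y)) ^ 2 ≤ (x ⬝ᵥ (M *ᵥ x)) * (y ⬝ᵥ (M *ᵥ y)) := by
  have key : ∀ t : ℝ, 0 ≤ (x ⬝ᵥ (M *ᵥ x)) * (t * t) + (2 * (x ⬝ᵥ (M *ᵥ y))) * t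
      + (y ⬝ᵥ (M *ᵥ y)) := by
    intro t
    have h0 := hM.dotProduct_mulVec_nonneg (t • x + y)
    have hsym := symm_dot M hM.1 y x
    simp only [star_trivial, mulVec_add, mulVec_smul, dotProduct_add, add_dotProduct,
      dotProduct_smul, smul_dotProduct, smul_eq_mul] at h0
    rw [hsym] at h0
    ring_nf at h0 ⊢
    linarith
  have hd := discrim_le_zero key
  rw [discrim] at hd
  nlinarith [hd]

lemma qf_upper (M : Matrix (Fin p) (Fin p) ℝ) (z : Fin p → ℝ) :
    z ⬝ᵥ (M *ᵥ z) ≤ (∑ i, ∑ j, |M i j|) * (∑ i, z i ^ 2) := by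
  have hS : ∀ i, z i ^ 2 ≤ ∑ i, z i ^ 2 :=
    fun i => Finset.single_le_sum (f := fun i => z i ^ 2) (fun _ _ => sq_nonneg _)
      (Finset.mem_univ i)
  calc z ⬝ᵥ (M *ᵥ z) = ∑ i, ∑ j, z i * (M i j * z j) := by
        simp [dotProduct, mulVec, Finset.mul_sum]
    _ ≤ ∑ i, ∑ j, |M i j| * (∑ i, z i ^ 2) := by
        refine Finset.sum_le_sum fun i _ => Finset.sum_le_sum fun j _ => ?_
        nlinarith [hS i, hS j, abs_nonneg (M i j), le_abs_self (M i j),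
          neg_abs_le (M i j), sq_nonneg (z i - z j), sq_nonneg (z i + z j)]
    _ = (∑ i, ∑ j, |M i j|) * (∑ i, z i ^ 2) := by
        rw [Finset.sum_mul]; exact Finset.sum_congr rfl fun i _ => (Finset.sum_mul _ _ _).symm

lemma mulVec_sq_le (M : Matrix (Fin p) (Fin p) ℝ) (z : Fin p → ℝ) :
    ∑ i, ((M *ᵥ z) i) ^ 2 ≤ (∑ i, ∑ j, (M i j) ^ 2) * (∑ i, z i ^ 2) := by
  rw [Finset.sum_mul]
  refine Finset.sum_le_sum fun i _ => ?_
  simpa [mulVec, dotProduct] using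
    Finset.sum_mul_sq_le_sq_mul_sq Finset.univ (fun j => M i j) z

lemma sum_sq_pos_of_ne_zero {z : Fin p → ℝ} (hz : z ≠ 0) : 0 < ∑ i, z i ^ 2 := by
  obtain ⟨i, hi⟩ := Function.ne_iff.mp hz
  have hi2 : z i ≠ 0 := by simpa using hi
  exact Finset.sum_pos' (fun _ _ => sq_nonneg _)
    ⟨i, Finset.mem_univ i, by positivity⟩

lemma qf_lower {M : Matrix (Fin p) (Fin p) ℝ} (hM : M.PosDef) (c : ℝ) (hc0 : 0 < c)
    (hc : ∀ z : Fin p → ℝ, z ⬝ᵥ (M *ᵥ z) ≤ c * ∑ i, z i ^ 2) (z : Fin p → ℝ) :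
    (∑ i, z i ^ 2) / c ≤ z ⬝ᵥ (M⁻¹ *ᵥ z) := by
  rcases eq_or_ne z 0 with rfl | hz
  · simp
  have hdet : IsUnit M.det := hM.det_pos.ne'.isUnit
  have hMM : M *ᵥ (M⁻¹ *ᵥ z) = z := by
    rw [mulVec_mulVec, Matrix.mul_nonsing_inv _ hdet, one_mulVec]
  have key := cs_psd hM.posSemidef z (M⁻¹ *ᵥ z)
  rw [hMM] at key
  have hzz : z ⬝ᵥ z = ∑ i, z i ^ 2 := by simp [dotProduct, sq]
  have hswap : (M⁻¹ *ᵥ z) ⬝ᵥ z = z ⬝ᵥ (M⁻¹ *ᵥ z) := dotProduct_comm _ _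
  rw [hzz, hswap] at key
  have hS : 0 < ∑ i, z i ^ 2 := sum_sq_pos_of_ne_zero hz
  have hqM := hc z
  have hinv : 0 ≤ z ⬝ᵥ (M⁻¹ *ᵥ z) := by
    simpa using hM.inv.posSemidef.dotProduct_mulVec_nonneg z
  rw [div_le_iff₀ hc0]
  nlinarith [key, hqM, hS, hinv]

lemma det_lb {C : Matrix (Fin p) (Fin p) ℝ} (hC : C.PosDef) (b : ℝ) (hb : 0 ≤ b)
    (h : ∀ z : Fin p → ℝ, b * ∑ i, z i ^ 2 ≤ z ⬝ᵥ (C *ᵥ z)) : b ^ p ≤ C.det := by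
  rw [hC.1.det_eq_prod_eigenvalues]
  have : (b : ℝ) ^ p = ∏ _i : Fin p, b := by simp
  rw [this]
  refine Finset.prod_le_prod (fun _ _ => hb) fun i _ => ?_
  have hv := hC.1.eigenvalues_eq i
  set v := hC.1.eigenvectorBasis i with hvdef
  have hnorm : ‖v‖ = 1 := hC.1.eigenvectorBasis.orthonormal.1 i
  have hsum : ∑ j, (v : EuclideanSpace ℝ (Fin p)) j ^ 2 = 1 := by
    have := EuclideanSpace.norm_eq (v : EuclideanSpace ℝ (Fin p))
    rw [hnorm] at this
    have h2 : Real.sqrt (∑ j, ‖(v : EuclideanSpace ℝ (Fin p)) j‖ ^ 2) = 1 := this.symm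
    have := Real.sqrt_eq_one.mp h2
    simpa [Real.norm_eq_abs, sq_abs] using this
  have : hC.1.eigenvalues i = (⇑v) ⬝ᵥ (C *ᵥ ⇑v) := by
    simpa [star_trivial] using hv
  rw [this]
  calc b = b * ∑ j, (v : EuclideanSpace ℝ (Fin p)) j ^ 2 := by rw [hsum]; ring
    _ ≤ _ := h _

lemma posDef_add_psd {A P : Matrix (Fin p) (Fin p) ℝ} (hA : A.PosDef) (hP : P.PosSemidef) :
    (A + P).PosDef := by
  refine posDef_iff_dotProduct_mulVec.mpr ⟨hA.1.add hP.1, fun z hz => ?_⟩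
  rw [add_mulVec, dotProduct_add]
  exact add_pos_of_pos_of_nonneg (hA.dotProduct_mulVec_pos hz) (hP.dotProduct_mulVec_nonneg z)

lemma diag_pos_of_posDef {B : Matrix (Fin p) (Fin p) ℝ} (hB : B.PosDef) (i : Fin p) :
    0 < B i i := by
  have h := hB.dotProduct_mulVec_pos (x := Pi.single i 1) (by
    intro h
    have := congrFun h i
    simp at this)
  simpa [dotProduct, mulVec, Pi.single_apply, Finset.mul_sum, mul_ite] using h

lemma qf_diagonal (d : Fin p → ℝ) (z : Fin p → ℝ) :
    z ⬝ᵥ ((Matrix.diagonal d) *ᵥ z) = ∑ i, d i * z i ^ 2 := by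
  simp [dotProduct, mulVec_diagonal, sq]
  exact Finset.sum_congr rfl fun i _ => by ring

-- positiv definiteness of `1 + n • B`

lemma posDef_one_add_smul {B : Matrix (Fin p) (Fin p) ℝ} (hB : B.PosDef) (n : ℕ) :
    ((1 : Matrix (Fin p) (Fin p) ℝ) + (n : ℝ) • B).PosDef := by
  refine posDef_iff_dotProduct_mulVec.mpr ⟨?_, fun z hz => ?_⟩
  · have h1 : ((1 : Matrix (Fin p) (Fin p) ℝ)).IsHermitian := isHermitian_one
    have h2 : (((n : ℝ)) • B).IsHermitian := by
      unfold Matrix.IsHermitian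
      rw [conjTranspose_smul, hB.1.eq]
      simp
    exact h1.add h2
  · rw [add_mulVec, dotProduct_add, one_mulVec, smul_mulVec, dotProduct_smul]
    have h1 : 0 < z ⬝ᵥ z := by
      have : (0:ℝ) < ∑ i, z i ^ 2 := by
        obtain ⟨i, hi⟩ := Function.ne_iff.mp hz
        have hi2 : z i ≠ 0 := by simpa using hi
        exact Finset.sum_pos' (fun _ _ => sq_nonneg _)
          ⟨i, Finset.mem_univ i, by positivity⟩
      simpa [dotProduct, sq] using this
    have h2 : (0:ℝ) ≤ z ⬝ᵥ (B *ᵥ z) := by simpa using hB.posSemidef.dotProduct_mulVec_nonneg z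
    have hn : (0:ℝ) ≤ (n : ℝ) := Nat.cast_nonneg n
    simp only [star_trivial, smul_eq_mul]
    nlinarith

lemma w_bound {B : Matrix (Fin p) (Fin p) ℝ} (hB : B.PosDef) (cI cB2 : ℝ)
    (hcI0 : 0 < cI)
    (hcI : ∀ z : Fin p → ℝ, z ⬝ᵥ (B⁻¹ *ᵥ z) ≤ cI * ∑ i, z i ^ 2)
    (hcB2 : ∀ z : Fin p → ℝ, ∑ i, ((B *ᵥ z) i) ^ 2 ≤ cB2 * ∑ i, z i ^ 2)
    (n : ℕ) (z : Fin p → ℝ) :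
    (n : ℝ) ^ 2 * ∑ i, ((((1 : Matrix (Fin p) (Fin p) ℝ) + (n : ℝ) • B)⁻¹ *ᵥ (B *ᵥ z)) i) ^ 2
      ≤ (cI ^ 2 * cB2) * ∑ i, z i ^ 2 := by
  set M := (1 : Matrix (Fin p) (Fin p) ℝ) + (n : ℝ) • B with hMdef
  have hM : M.PosDef := posDef_one_add_smul hB n
  set w := M⁻¹ *ᵥ (B *ᵥ z) with hwdef
  have hMw : M *ᵥ w = B *ᵥ z := by
    rw [hwdef, mulVec_mulVec, Matrix.mul_nonsing_inv _ hM.det_pos.ne'.isUnit, one_mulVec]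
  set Sw := ∑ i, w i ^ 2 with hSw
  set Sz := ∑ i, z i ^ 2 with hSz
  set E := w ⬝ᵥ (B *ᵥ z) with hE
  have hww : w ⬝ᵥ w = Sw := by simp [dotProduct, sq, hSw]
  have hEeq : E = Sw + (n : ℝ) * (w ⬝ᵥ (B *ᵥ w)) := by
    rw [hE, ← hMw, hMdef, add_mulVec, one_mulVec, smul_mulVec, dotProduct_add,
      dotProduct_smul, smul_eq_mul, hww]
  have hqf : Sw / cI ≤ w ⬝ᵥ (B *ᵥ w) := by
    have h := qf_lower hB.inv cI hcI0 hcI w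
    rwa [Matrix.nonsing_inv_nonsing_inv _ hB.det_pos.ne'.isUnit] at h
  have hSw0 : 0 ≤ Sw := Finset.sum_nonneg fun _ _ => sq_nonneg _
  have hSz0 : 0 ≤ Sz := Finset.sum_nonneg fun _ _ => sq_nonneg _
  have hqf0 : 0 ≤ w ⬝ᵥ (B *ᵥ w) := le_trans (div_nonneg hSw0 hcI0.le) hqf
  have hE0 : 0 ≤ E := by
    rw [hEeq]
    have := mul_nonneg (Nat.cast_nonneg (α := ℝ) n) hqf0
    linarith
  have h1 : (n : ℝ) * Sw ≤ cI * E := by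
    have h1a : (n : ℝ) * (Sw / cI) ≤ (n : ℝ) * (w ⬝ᵥ (B *ᵥ w)) :=
      mul_le_mul_of_nonneg_left hqf (Nat.cast_nonneg n)
    have h1b : (n : ℝ) * (w ⬝ᵥ (B *ᵥ w)) ≤ E := by rw [hEeq]; linarith
    calc (n : ℝ) * Sw = cI * ((n : ℝ) * (Sw / cI)) := by field_simp
      _ ≤ cI * E := mul_le_mul_of_nonneg_left (le_trans h1a h1b) hcI0.le
  have hE2 : E ^ 2 ≤ Sw * (cB2 * Sz) := by
    have hcs : E ^ 2 ≤ Sw * ∑ i, ((B *ᵥ z) i) ^ 2 := by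
      have := Finset.sum_mul_sq_le_sq_mul_sq Finset.univ w (fun i => (B *ᵥ z) i)
      simpa [hE, dotProduct, hSw] using this
    have hb := hcB2 z
    nlinarith [hSw0]
  have hsq : ((n : ℝ) * Sw) ^ 2 ≤ cI ^ 2 * (Sw * (cB2 * Sz)) := by
    have := pow_le_pow_left₀ (mul_nonneg (Nat.cast_nonneg n) hSw0) h1 2
    nlinarith [hE2, sq_nonneg cI]
  rcases hSw0.eq_or_lt with h | h
  · rw [← h]
    have h2 : (0:ℝ) ≤ cB2 * Sz := le_trans (Finset.sum_nonneg fun _ _ => sq_nonneg _) (hcB2 z)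
    nlinarith [sq_nonneg cI]
  · nlinarith [hsq, h]

lemma sq_le_exp {a S : ℝ} (ha : 0 < a) (hS : 0 ≤ S) :
    S ^ 2 ≤ 16 / a ^ 2 * Real.exp (a / 2 * S) := by
  have h1 : a / 4 * S + 1 ≤ Real.exp (a / 4 * S) := Real.add_one_le_exp _
  have h2 : Real.exp (a / 4 * S) ^ 2 = Real.exp (a / 2 * S) := by
    rw [sq, ← Real.exp_add]; ring_nf
  have h3 : (a / 4 * S) ^ 2 ≤ Real.exp (a / 4 * S) ^ 2 := by
    have h0 : 0 ≤ a / 4 * S := by positivity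
    exact pow_le_pow_left₀ h0 (by linarith) 2
  rw [h2] at h3
  have ha2 : 0 < a ^ 2 := by positivity
  rw [div_mul_eq_mul_div, le_div_iff₀ ha2]
  nlinarith [h3]

lemma integrable_G {a : ℝ} (ha : 0 < a) :
    Integrable (fun z : Fin p → ℝ => (∑ i, z i ^ 2) ^ 2 * Real.exp (-(a * ∑ i, z i ^ 2))) := by
  have hg : Integrable (fun z : Fin p → ℝ => (16 / a ^ 2) * ∏ i, Real.exp (-(a / 2) * z i ^ 2)) :=
    (Integrable.fintype_prod (f := fun _ (t : ℝ) => Real.exp (-(a / 2) * t ^ 2))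
      (fun _ => integrable_exp_neg_mul_sq (half_pos ha))).const_mul _
  refine hg.mono' ?_ (Eventually.of_forall fun z => ?_)
  · apply Continuous.aestronglyMeasurable
    have hc : Continuous fun z : Fin p → ℝ => ∑ i, z i ^ 2 :=
      continuous_finset_sum _ fun i _ => (continuous_apply i).pow 2
    exact (hc.pow 2).mul (Real.continuous_exp.comp (continuous_const.mul hc).neg)
  · set S := ∑ i, z i ^ 2 with hSdef
    have hS0 : 0 ≤ S := Finset.sum_nonneg fun _ _ => sq_nonneg _
    have hE : ∏ i, Real.exp (-(a / 2) * z i ^ 2) = Real.exp (-(a / 2) * S) := by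
      rw [← Real.exp_sum, hSdef, Finset.mul_sum]
    rw [hE]
    have hnn : (0:ℝ) ≤ S ^ 2 * Real.exp (-(a * S)) := by positivity
    rw [Real.norm_of_nonneg hnn]
    have key : S ^ 2 ≤ 16 / a ^ 2 * Real.exp (a / 2 * S) := sq_le_exp ha hS0
    have hsplit : Real.exp (-(a * S)) = Real.exp (-(a / 2) * S) * Real.exp (-(a / 2) * S) := by
      rw [← Real.exp_add]; ring_nf
    have hcomb : Real.exp (a / 2 * S) * Real.exp (-(a / 2) * S) = 1 := by
      rw [← Real.exp_add]; ring_nf; exact Real.exp_zero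
    calc S ^ 2 * Real.exp (-(a * S))
        = (S ^ 2 * Real.exp (-(a / 2) * S)) * Real.exp (-(a / 2) * S) := by
          rw [hsplit]; ring
      _ ≤ (16 / a ^ 2 * (Real.exp (a / 2 * S) * Real.exp (-(a / 2) * S)))
            * Real.exp (-(a / 2) * S) := by
          have := mul_le_mul_of_nonneg_right key (Real.exp_nonneg (-(a / 2) * S))
          have h2 := mul_le_mul_of_nonneg_right this (Real.exp_nonneg (-(a / 2) * S))
          calc S ^ 2 * Real.exp (-(a / 2) * S) * Real.exp (-(a / 2) * S)
              ≤ 16 / a ^ 2 * Real.exp (a / 2 * S) * Real.exp (-(a / 2) * S)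
                * Real.exp (-(a / 2) * S) := by nlinarith [Real.exp_pos (-(a/2)*S)]
            _ = _ := by ring
      _ = 16 / a ^ 2 * Real.exp (-(a / 2) * S) := by rw [hcomb]; ring

end Helpers

/-- Fourth-moment bound for the one-step change of the variational mean: for `Ỹ ~ N(m, B⁻¹ + S_k)`
and `Δ := Σ_{k+1} B (Ỹ - m)`, there is a constant `C > 0` depending only on `B` and `p` such that
for every `k ≥ 1` and every `m`, `E[‖Δ‖₂⁴] ≤ C / k⁴`; in particular `√(E[‖Δ‖₂⁴]) ≤ √C / k²`. -/
theorem stmt_18 (p : ℕ) (hp : 1 ≤ p) (B : Matrix (Fin p) (Fin p) ℝ) (hB : B.PosDef) :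
    ∃ C : ℝ, 0 < C ∧ ∀ k : ℕ, 1 ≤ k → ∀ m : Fin p → ℝ,
      (∫ y : Fin p → ℝ,
          (∑ i, (Sig B (k + 1) *ᵥ (B *ᵥ (y - m))) i ^ 2) ^ 2 *
            gaussDensity m (B⁻¹ + Sdiag B k) y) ≤ C / (k : ℝ) ^ 4 ∧
      Real.sqrt
          (∫ y : Fin p → ℝ,
            (∑ i, (Sig B (k + 1) *ᵥ (B *ᵥ (y - m))) i ^ 2) ^ 2 *
              gaussDensity m (B⁻¹ + Sdiag B k) y) ≤ Real.sqrt C / (k : ℝ) ^ 2 := by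
  classical
  -- diagonal entries of B are positive
  have hdiag := diag_pos_of_posDef hB
  have hBdet : IsUnit B.det := hB.det_pos.ne'.isUnit
  -- constants
  set cB : ℝ := (∑ i, ∑ j, |B i j|) + 1 with hcBdef
  set cI : ℝ := (∑ i, ∑ j, |B⁻¹ i j|) + 1 with hcIdef
  set cB2 : ℝ := (∑ i, ∑ j, (B i j) ^ 2) + 1 with hcB2def
  have habs_nonneg : ∀ M : Matrix (Fin p) (Fin p) ℝ, (0:ℝ) ≤ ∑ i, ∑ j, |M i j| :=
    fun M => Finset.sum_nonneg fun _ _ => Finset.sum_nonneg fun _ _ => abs_nonneg _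
  have hcB0 : 0 < cB := by have := habs_nonneg B; rw [hcBdef]; linarith
  have hcI0 : 0 < cI := by have := habs_nonneg B⁻¹; rw [hcIdef]; linarith
  have hcB20 : 0 < cB2 := by
    have : (0:ℝ) ≤ ∑ i, ∑ j, (B i j)^2 :=
      Finset.sum_nonneg fun _ _ => Finset.sum_nonneg fun _ _ => sq_nonneg _
    rw [hcB2def]; linarith
  have hSnn : ∀ z : Fin p → ℝ, (0:ℝ) ≤ ∑ i, z i ^ 2 :=
    fun z => Finset.sum_nonneg fun _ _ => sq_nonneg _
  have hqB : ∀ z : Fin p → ℝ, z ⬝ᵥ (B *ᵥ z) ≤ cB * ∑ i, z i ^ 2 := by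
    intro z
    refine (qf_upper B z).trans ?_
    have := hSnn z
    rw [hcBdef]; nlinarith
  have hqI : ∀ z : Fin p → ℝ, z ⬝ᵥ (B⁻¹ *ᵥ z) ≤ cI * ∑ i, z i ^ 2 := by
    intro z
    refine (qf_upper B⁻¹ z).trans ?_
    have := hSnn z
    rw [hcIdef]; nlinarith
  have hqB2 : ∀ z : Fin p → ℝ, ∑ i, ((B *ᵥ z) i) ^ 2 ≤ cB2 * ∑ i, z i ^ 2 := by
    intro z
    refine (mulVec_sq_le B z).trans ?_
    have := hSnn z
    rw [hcB2def]; nlinarith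
  -- more constants
  set cC : ℝ := cI + 1 with hcCdef
  have hcC0 : 0 < cC := by rw [hcCdef]; linarith
  set a : ℝ := 1 / (2 * cC) with hadef
  have ha0 : 0 < a := by rw [hadef]; positivity
  set dl : ℝ := (cB⁻¹) ^ p with hdldef
  have hdl0 : 0 < dl := by rw [hdldef]; positivity
  set D0 : ℝ := dl ^ (-(1:ℝ)/2) with hD0def
  have hD00 : 0 < D0 := Real.rpow_pos_of_pos hdl0 _
  set c0 : ℝ := (2 * Real.pi) ^ (-(p:ℝ)/2) with hc0def
  have hc00 : 0 < c0 := Real.rpow_pos_of_pos (by positivity) _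
  set K : ℝ := cI ^ 2 * cB2 with hKdef
  have hK0 : 0 < K := by rw [hKdef]; positivity
  set G : (Fin p → ℝ) → ℝ :=
    fun z => (∑ i, z i ^ 2) ^ 2 * Real.exp (-(a * ∑ i, z i ^ 2)) with hGdef
  have hGnn : ∀ z, 0 ≤ G z := fun z => by
    rw [hGdef]; positivity
  have hGint : Integrable G := integrable_G ha0
  set Ical : ℝ := ∫ z : Fin p → ℝ, G z with hIdef
  have hIcal0 : 0 ≤ Ical := integral_nonneg hGnn
  refine ⟨K ^ 2 * (c0 * D0) * Ical + 1, by positivity, ?_⟩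
  intro k hk m
  -- the covariance matrix
  set Ck : Matrix (Fin p) (Fin p) ℝ := B⁻¹ + Sdiag B k with hCkdef
  have hSd : (Sdiag B k).PosDef := by
    rw [Sdiag, Matrix.posDef_diagonal_iff]
    intro i
    have := hdiag i
    have hk0 : (0:ℝ) ≤ (k:ℝ) := Nat.cast_nonneg k
    have : (0:ℝ) < 1 + (k:ℝ) * B i i := by nlinarith
    positivity
  have hCk : Ck.PosDef := posDef_add_psd hB.inv hSd.posSemidef
  -- quadratic form bounds for Ck
  have hqSd_le : ∀ z : Fin p → ℝ, z ⬝ᵥ (Sdiag B k *ᵥ z) ≤ ∑ i, z i ^ 2 := by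
    intro z
    rw [Sdiag, qf_diagonal]
    refine Finset.sum_le_sum fun i _ => ?_
    have h1 : (1:ℝ) ≤ 1 + (k:ℝ) * B i i := by
      have hk0 : (0:ℝ) ≤ (k:ℝ) := Nat.cast_nonneg k
      linarith [mul_nonneg hk0 (hdiag i).le]
    have h2 : (1 + (k:ℝ) * B i i)⁻¹ ≤ 1 := by
      rw [inv_le_one_iff₀]; right; exact h1
    nlinarith [sq_nonneg (z i)]
  have hqSd_ge : ∀ z : Fin p → ℝ, 0 ≤ z ⬝ᵥ (Sdiag B k *ᵥ z) := fun z => by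
    simpa using hSd.posSemidef.dotProduct_mulVec_nonneg z
  have hqCk_le : ∀ z : Fin p → ℝ, z ⬝ᵥ (Ck *ᵥ z) ≤ cC * ∑ i, z i ^ 2 := by
    intro z
    rw [hCkdef, add_mulVec, dotProduct_add]
    have := hqI z
    have := hqSd_le z
    rw [hcCdef]; linarith [hSnn z]
  have hqCk_ge : ∀ z : Fin p → ℝ, cB⁻¹ * ∑ i, z i ^ 2 ≤ z ⬝ᵥ (Ck *ᵥ z) := by
    intro z
    rw [hCkdef, add_mulVec, dotProduct_add]
    have h1 : (∑ i, z i ^ 2) / cB ≤ z ⬝ᵥ (B⁻¹ *ᵥ z) := qf_lower hB cB hcB0 hqB z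
    have h2 := hqSd_ge z
    have : cB⁻¹ * ∑ i, z i ^ 2 = (∑ i, z i ^ 2) / cB := by ring
    linarith [this ▸ h1]
  -- determinant bound
  have hdet_lb : dl ≤ Ck.det := by
    rw [hdldef]
    exact det_lb hCk cB⁻¹ (by positivity) hqCk_ge
  have hdet_rpow : Ck.det ^ (-(1:ℝ)/2) ≤ D0 := by
    rw [hD0def]
    exact Real.rpow_le_rpow_of_nonpos hdl0 hdet_lb (by norm_num)
  -- pointwise bound on the density
  have hdens_le : ∀ y : Fin p → ℝ,
      gaussDensity m Ck y ≤ c0 * D0 * Real.exp (-(a * ∑ i, (y - m) i ^ 2)) := by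
    intro y
    rw [gaussDensity]
    set z : Fin p → ℝ := y - m with hzdef
    have hql : (∑ i, z i ^ 2) / cC ≤ z ⬝ᵥ (Ck⁻¹ *ᵥ z) := qf_lower hCk cC hcC0 hqCk_le z
    have hexp : Real.exp (-(1/2 : ℝ) * (z ⬝ᵥ (Ck⁻¹ *ᵥ z)))
        ≤ Real.exp (-(a * ∑ i, z i ^ 2)) := by
      apply Real.exp_le_exp.mpr
      have : a * ∑ i, z i ^ 2 = (1/2 : ℝ) * ((∑ i, z i ^ 2) / cC) := by
        rw [hadef]; field_simp
      nlinarith [hql]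
    calc (2 * Real.pi) ^ (-(p:ℝ)/2) * Ck.det ^ (-(1:ℝ)/2)
          * Real.exp (-(1/2 : ℝ) * (z ⬝ᵥ (Ck⁻¹ *ᵥ z)))
        ≤ (2 * Real.pi) ^ (-(p:ℝ)/2) * D0 * Real.exp (-(a * ∑ i, z i ^ 2)) := by
          have hd0 : (0:ℝ) ≤ Ck.det ^ (-(1:ℝ)/2) := (Real.rpow_pos_of_pos hCk.det_pos _).le
          have he0 : (0:ℝ) ≤ Real.exp (-(1/2 : ℝ) * (z ⬝ᵥ (Ck⁻¹ *ᵥ z))) := Real.exp_nonneg _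
          have := mul_le_mul hdet_rpow hexp he0 hD00.le
          have hc0nn : (0:ℝ) ≤ (2 * Real.pi) ^ (-(p:ℝ)/2) := by positivity
          calc (2 * Real.pi) ^ (-(p:ℝ)/2) * Ck.det ^ (-(1:ℝ)/2)
                * Real.exp (-(1/2 : ℝ) * (z ⬝ᵥ (Ck⁻¹ *ᵥ z)))
              = (2 * Real.pi) ^ (-(p:ℝ)/2) * (Ck.det ^ (-(1:ℝ)/2)
                * Real.exp (-(1/2 : ℝ) * (z ⬝ᵥ (Ck⁻¹ *ᵥ z)))) := by ring
            _ ≤ (2 * Real.pi) ^ (-(p:ℝ)/2) * (D0 * Real.exp (-(a * ∑ i, z i ^ 2))) :=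
                mul_le_mul_of_nonneg_left this hc0nn
            _ = _ := by ring
      _ = c0 * D0 * Real.exp (-(a * ∑ i, z i ^ 2)) := by rw [hc0def]
  -- bound on the squared-norm factor
  have hk0 : (0:ℝ) < (k:ℝ) := by exact_mod_cast hk
  have hw_le : ∀ y : Fin p → ℝ,
      (∑ i, (Sig B (k + 1) *ᵥ (B *ᵥ (y - m))) i ^ 2) ^ 2
        ≤ K ^ 2 * (∑ i, (y - m) i ^ 2) ^ 2 / (k:ℝ) ^ 4 := by
    intro y
    set z : Fin p → ℝ := y - m with hzdef
    have hw := w_bound hB cI cB2 hcI0 hqI hqB2 (k+1) z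
    have hSig : Sig B (k + 1) = ((1 : Matrix (Fin p) (Fin p) ℝ) + ((k+1 : ℕ) : ℝ) • B)⁻¹ := rfl
    rw [← hSig] at hw
    set Sw : ℝ := ∑ i, (Sig B (k + 1) *ᵥ (B *ᵥ z)) i ^ 2 with hSwdef
    have hSw0 : 0 ≤ Sw := hSnn _
    have hk1 : (k:ℝ) ^ 2 ≤ ((k+1 : ℕ) : ℝ) ^ 2 := by
      push_cast
      nlinarith [hk0.le]
    have h1 : (k:ℝ) ^ 2 * Sw ≤ K * ∑ i, z i ^ 2 := by
      rw [hKdef]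
      calc (k:ℝ) ^ 2 * Sw ≤ ((k+1 : ℕ) : ℝ) ^ 2 * Sw := mul_le_mul_of_nonneg_right hk1 hSw0
        _ ≤ (cI ^ 2 * cB2) * ∑ i, z i ^ 2 := hw
    have h2 : ((k:ℝ) ^ 2 * Sw) ^ 2 ≤ (K * ∑ i, z i ^ 2) ^ 2 :=
      pow_le_pow_left₀ (by positivity) h1 2
    have hk4 : (0:ℝ) < (k:ℝ) ^ 4 := by positivity
    rw [le_div_iff₀ hk4]
    nlinarith [h2]
  have hdnsnn : ∀ y : Fin p → ℝ, 0 ≤ gaussDensity m Ck y := by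
    intro y
    rw [gaussDensity]
    exact (mul_pos (mul_pos (Real.rpow_pos_of_pos (by positivity) _)
      (Real.rpow_pos_of_pos hCk.det_pos _)) (Real.exp_pos _)).le
  -- pointwise bound on the full integrand
  have hpt : ∀ y : Fin p → ℝ,
      (∑ i, (Sig B (k + 1) *ᵥ (B *ᵥ (y - m))) i ^ 2) ^ 2 * gaussDensity m Ck y
        ≤ (K ^ 2 * (c0 * D0) / (k:ℝ) ^ 4) * G (y - m) := by
    intro y
    have h1 := hw_le y
    have h2 := hdens_le y
    have hdnn : 0 ≤ gaussDensity m Ck y := hdnsnn y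
    have hGny : G (y - m) = (∑ i, (y - m) i ^ 2) ^ 2
        * Real.exp (-(a * ∑ i, (y - m) i ^ 2)) := by rw [hGdef]
    have hSq0 : (0:ℝ) ≤ (∑ i, (Sig B (k + 1) *ᵥ (B *ᵥ (y - m))) i ^ 2) ^ 2 := by positivity
    calc (∑ i, (Sig B (k + 1) *ᵥ (B *ᵥ (y - m))) i ^ 2) ^ 2 * gaussDensity m Ck y
        ≤ (K ^ 2 * (∑ i, (y - m) i ^ 2) ^ 2 / (k:ℝ) ^ 4)
            * (c0 * D0 * Real.exp (-(a * ∑ i, (y - m) i ^ 2))) := by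
          apply mul_le_mul h1 h2 hdnn (by positivity)
      _ = (K ^ 2 * (c0 * D0) / (k:ℝ) ^ 4) * G (y - m) := by rw [hGny]; ring
  -- integrate the bound
  set coef : ℝ := K ^ 2 * (c0 * D0) / (k:ℝ) ^ 4 with hcoefdef
  have hint_shift : Integrable (fun y : Fin p → ℝ => coef * G (y - m)) :=
    (hGint.comp_sub_right m).const_mul coef
  have hmain : (∫ y : Fin p → ℝ,
      (∑ i, (Sig B (k + 1) *ᵥ (B *ᵥ (y - m))) i ^ 2) ^ 2 * gaussDensity m Ck y)
      ≤ (K ^ 2 * (c0 * D0) * Ical + 1) / (k:ℝ) ^ 4 := by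
    have hstep : (∫ y : Fin p → ℝ,
        (∑ i, (Sig B (k + 1) *ᵥ (B *ᵥ (y - m))) i ^ 2) ^ 2 * gaussDensity m Ck y)
        ≤ ∫ y : Fin p → ℝ, coef * G (y - m) := by
      refine integral_mono_of_nonneg (Eventually.of_forall fun y => ?_) hint_shift
        (Eventually.of_forall fun y => hpt y)
      exact mul_nonneg (by positivity) (hdnsnn y)
    have heq : (∫ y : Fin p → ℝ, coef * G (y - m)) = coef * Ical := by
      rw [integral_const_mul, hIdef, integral_sub_right_eq_self G m]
    rw [heq] at hstep
    refine hstep.trans ?_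
    have hre : coef * Ical = (K ^ 2 * (c0 * D0) * Ical) / (k:ℝ) ^ 4 := by
      rw [hcoefdef]; ring
    rw [hre]
    gcongr
    linarith
  refine ⟨hmain, ?_⟩
  have hsq := Real.sqrt_le_sqrt hmain
  refine hsq.trans ?_
  rw [Real.sqrt_div (by positivity) ((k:ℝ) ^ 4)]
  have h4 : ((k:ℝ) ^ 4) = ((k:ℝ) ^ 2) ^ 2 := by ring
  rw [h4, Real.sqrt_sq (by positivity)]
end
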